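/- arXiv:2102.01034 — 4 statements merged into one kernel-verified Lean document; each statement's English description precedes it below -/
import Mathlib

section
/- Every tournament on n ≥ 1 vertices contains a transitive subtournament (an induced acyclic subdigraph) on at least ⌊log₂ n⌋ + 1 vertices. -/
/-- A digraph (given by its arc relation) is acyclic if no vertex lies on a directed cycle. -/
def DiAcyclic {V : Type*} (D : V → V → Prop) : Prop :=
  ∀ v : V, ¬ Relation.TransGen D v v

/-- The subdigraph induced on a set of vertices is acyclic. -/
def AcyclicOn {V : Type*} (D : V → V → Prop) (S : Set V) : Prop :=
  DiAcyclic (fun a b => a ∈ S ∧ b ∈ S ∧ D a b)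

/-- A digraph is `k`-dicolourable if its vertices can be partitioned into `k`
classes each inducing an acyclic subdigraph. -/
def Dicolourable {V : Type*} (D : V → V → Prop) (k : ℕ) : Prop :=
  ∃ f : V → Fin k, ∀ i : Fin k, AcyclicOn D {v | f v = i}

/-- The dichromatic number. -/
noncomputable def dichi {V : Type*} (D : V → V → Prop) : ℕ :=
  sInf {k | Dicolourable D k}

/-- A digraph is `k`-dicritical if its dichromatic number is `k` and every proper
subdigraph (obtained by deleting vertices and/or arcs) has dichromatic number `< k`. -/
def Dicritical {V : Type*} (D : V → V → Prop) (k : ℕ) : Prop :=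
  dichi D = k ∧
    ∀ (S : Set V) (R : V → V → Prop),
      (∀ a b, R a b → a ∈ S ∧ b ∈ S ∧ D a b) →
      ¬(S = Set.univ ∧ R = D) → dichi R < k

/-- An oriented graph: a digraph with no loops and no digons. -/
def OrientedGraph {V : Type*} (D : V → V → Prop) : Prop :=
  ∀ a b, D a b → ¬ D b a

/-- A tournament: an oriented graph with exactly one arc between any two distinct vertices. -/
def IsTournament {V : Type*} (D : V → V → Prop) : Prop :=
  OrientedGraph D ∧ ∀ a b : V, a ≠ b → D a b ∨ D b a

/-- Out-degree of a vertex. -/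
noncomputable def outDeg {V : Type*} (D : V → V → Prop) (v : V) : ℕ :=
  Nat.card {w | D v w}

/-- In-degree of a vertex. -/
noncomputable def inDeg {V : Type*} (D : V → V → Prop) (v : V) : ℕ :=
  Nat.card {w | D w v}

/-- Number of arcs. -/
noncomputable def numArcs {V : Type*} (D : V → V → Prop) : ℕ :=
  Nat.card {p : V × V | D p.1 p.2}

lemma acyclicOn_swap {V : Type*} {D : V → V → Prop} {S : Set V}
    (h : AcyclicOn D S) : AcyclicOn (Function.swap D) S := by
  intro v hv
  apply h v
  rw [← Relation.transGen_swap]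
  exact Relation.TransGen.mono (p := Function.swap (fun a b => a ∈ S ∧ b ∈ S ∧ D a b)) (fun a b hab => ⟨hab.2.1, hab.1, hab.2.2⟩) v v hv

lemma acyclicOn_singleton {V : Type*} {D : V → V → Prop} (hO : OrientedGraph D) (v : V) :
    AcyclicOn D ({v} : Set V) := by
  intro u hu
  have : ∀ a b : V, (a ∈ ({v} : Set V) ∧ b ∈ ({v} : Set V) ∧ D a b) → False := by
    rintro a b ⟨ha, hb, hab⟩
    simp only [Set.mem_singleton_iff] at ha hb
    subst ha; subst hb
    exact hO _ _ hab hab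
  cases hu with
  | single h => exact this _ _ h
  | tail h1 h2 => exact this _ _ h2

lemma acyclicOn_insert {V : Type*} {D : V → V → Prop} (hO : OrientedGraph D)
    {T : Set V} {v : V} (hT : AcyclicOn D T) (hdom : ∀ t ∈ T, D v t) :
    AcyclicOn D (insert v T) := by
  intro u hu
  set R := fun a b => a ∈ insert v T ∧ b ∈ insert v T ∧ D a b with hR
  have noin : ∀ a, ¬ R a v := by
    rintro a ⟨ha, -, hav⟩
    rcases Set.mem_insert_iff.mp ha with h | haT
    · exact hO v v (h ▸ hav) (h ▸ hav)
    · exact hO v a (hdom a haT) hav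
  have key : ∀ x y : V, Relation.TransGen R x y → x ∈ T →
      y ∈ T ∧ Relation.TransGen (fun a b => a ∈ T ∧ b ∈ T ∧ D a b) x y := by
    intro x y hxy
    induction hxy with
    | @single w h =>
      intro hx
      have hy : w ∈ T := by
        rcases Set.mem_insert_iff.mp h.2.1 with e | hyT
        · exact absurd (e ▸ h) (noin x)
        · exact hyT
      exact ⟨hy, Relation.TransGen.single ⟨hx, hy, h.2.2⟩⟩
    | @tail b c h1 h2 ih =>
      intro hx
      obtain ⟨hc, htg⟩ := ih hx
      have hy : c ∈ T := by
        rcases Set.mem_insert_iff.mp h2.2.1 with e | hyT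
        · exact absurd (e ▸ h2) (noin b)
        · exact hyT
      exact ⟨hy, htg.tail ⟨hc, hy, h2.2.2⟩⟩
  have hu' : u ∈ insert v T := by
    cases hu with
    | single h => exact h.1
    | tail h1 h2 => exact h2.2.1
  rcases hu' with rfl | huT
  · obtain ⟨b, -, hb⟩ := (Relation.TransGen.tail'_iff).mp hu
    exact noin b hb
  · exact hT u (key u u hu huT).2

lemma main_lemma {V : Type*} :
    ∀ (n : ℕ) (D : V → V → Prop), IsTournament D → ∀ A : Finset V,
      A.card = n → A.Nonempty →
      ∃ S : Finset V, (S : Set V) ⊆ (A : Set V) ∧ AcyclicOn D (S : Set V) ∧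
        Nat.log 2 n + 1 ≤ S.card := by
  intro n
  induction n using Nat.strong_induction_on with
  | _ n IH =>
    intro D hT A hcard hne
    classical
    obtain ⟨v, hv⟩ := hne
    have hvv : ¬ D v v := fun h => hT.1 v v h h
    set Out := A.filter (fun w => D v w) with hOut
    set Inn := A.filter (fun w => D w v) with hInn
    have hvOut : v ∉ Out := by simp [hOut, hvv]
    have hvInn : v ∉ Inn := by simp [hInn, hvv]
    have hsplit : A.erase v = Out ∪ Inn := by
      ext w
      simp only [Finset.mem_erase, Finset.mem_union, hOut, hInn, Finset.mem_filter]
      constructor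
      · rintro ⟨hw, hwA⟩
        rcases hT.2 v w (Ne.symm hw) with h | h
        · exact Or.inl ⟨hwA, h⟩
        · exact Or.inr ⟨hwA, h⟩
      · rintro (⟨hwA, h⟩ | ⟨hwA, h⟩)
        · exact ⟨fun e => hvv (e ▸ h), hwA⟩
        · exact ⟨fun e => hvv (e ▸ h), hwA⟩
    have hdisj : Disjoint Out Inn := by
      rw [Finset.disjoint_left]
      intro w hw hw'
      simp only [hOut, hInn, Finset.mem_filter] at hw hw'
      exact hT.1 v w hw.2 hw'.2
    have hcards : Out.card + Inn.card = n - 1 := by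
      rw [← Finset.card_union_of_disjoint hdisj, ← hsplit, Finset.card_erase_of_mem hv, hcard]
    have hn1 : 1 ≤ n := by rw [← hcard]; exact Finset.card_pos.mpr ⟨v, hv⟩
    by_cases h1 : n = 1
    · refine ⟨{v}, by simp [hv], ?_, by simp [h1]⟩
      simpa using acyclicOn_singleton hT.1 v
    have hn2 : 2 ≤ n := by omega
    have hlog : Nat.log 2 n = Nat.log 2 (n / 2) + 1 := by
      have := Nat.log_div_base 2 n
      have hpos : 0 < Nat.log 2 n := Nat.log_pos one_lt_two hn2
      omega
    -- the subset B with domination direction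
    have step : ∀ (D' : V → V → Prop), IsTournament D' → ∀ B : Finset V,
        B ⊆ A → v ∉ B → (∀ t ∈ B, D' v t) → n / 2 ≤ B.card →
        ∃ S : Finset V, (S : Set V) ⊆ (A : Set V) ∧ AcyclicOn D' (S : Set V) ∧
          Nat.log 2 n + 1 ≤ S.card := by
      intro D' hT' B hBA hvB hdom hB2
      have hBlt : B.card < n := by
        have : B.card ≤ (A.erase v).card := Finset.card_le_card (fun w hw =>
          Finset.mem_erase.mpr ⟨fun e => hvB (e ▸ hw), hBA hw⟩)
        rw [Finset.card_erase_of_mem hv, hcard] at this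
        omega
      have hBne : B.Nonempty := Finset.card_pos.mp (by omega)
      obtain ⟨S, hSB, hSac, hScard⟩ := IH B.card hBlt D' hT' B rfl hBne
      have hvS : v ∉ S := fun h => hvB (by exact_mod_cast hSB h)
      refine ⟨insert v S, ?_, ?_, ?_⟩
      · intro w hw
        simp only [Finset.coe_insert, Set.mem_insert_iff] at hw
        rcases hw with rfl | hw
        · exact hv
        · exact (Finset.coe_subset.mpr hBA : (B : Set V) ⊆ A) (hSB hw)
      · rw [Finset.coe_insert]
        exact acyclicOn_insert hT'.1 hSac (fun t ht => hdom t (by exact_mod_cast hSB ht))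
      · rw [Finset.card_insert_of_notMem hvS]
        have hmono : Nat.log 2 (n / 2) ≤ Nat.log 2 B.card :=
          Nat.log_mono_right hB2
        omega
    by_cases hcase : Inn.card ≤ Out.card
    · have hB2 : n / 2 ≤ Out.card := by omega
      exact step D hT Out (Finset.filter_subset _ _) hvOut
        (fun t ht => (Finset.mem_filter.mp ht).2) hB2
    · have hB2 : n / 2 ≤ Inn.card := by omega
      have hT' : IsTournament (Function.swap D) :=
        ⟨fun a b hab hba => hT.1 b a hab hba,
         fun a b hab => (hT.2 a b hab).symm⟩
      obtain ⟨S, hSA, hSac, hScard⟩ := step (Function.swap D) hT' Inn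
        (Finset.filter_subset _ _) hvInn
        (fun t ht => (Finset.mem_filter.mp ht).2) hB2
      exact ⟨S, hSA, by simpa using acyclicOn_swap hSac, hScard⟩


/-- Every tournament on `n ≥ 1` vertices contains a transitive (acyclic induced)
subtournament on at least `⌊log₂ n⌋ + 1` vertices. -/
theorem tournament_transitive_sub {V : Type*} [Fintype V] (D : V → V → Prop)
    (hT : IsTournament D) (hn : 1 ≤ Fintype.card V) :
    ∃ S : Finset V, AcyclicOn D (S : Set V) ∧
      Nat.log 2 (Fintype.card V) + 1 ≤ S.card := by
  have : Nonempty V := Fintype.card_pos_iff.mp hn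
  obtain ⟨S, -, hac, hc⟩ := main_lemma (Fintype.card V) D hT Finset.univ
    (Finset.card_univ) Finset.univ_nonempty
  exact ⟨S, hac, hc⟩
end

section
/- Every 3-dicritical oriented graph on at least 10 vertices has at least 21 arcs. -/
namespace ThreeDicrit

open scoped Classical

variable {V : Type*}

/-- monochromatic adjacency within `S` -/
def Rel (E : V → V → Prop) (S : Set V) (f : V → Fin 2) : V → V → Prop :=
  fun a b => a ∈ S ∧ b ∈ S ∧ E a b ∧ f a = f b

/-- `f` is a proper 2-dicolouring of the subdigraph induced on `S` -/
def Good (E : V → V → Prop) (S : Set V) (f : V → Fin 2) : Prop :=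
  ∀ v, ¬ Relation.TransGen (Rel E S f) v v

lemma good_congr {E : V → V → Prop} {S : Set V} {f g : V → Fin 2}
    (h : ∀ t ∈ S, f t = g t) (hg : Good E S g) : Good E S f := by
  intro v hv
  refine hg v (Relation.TransGen.mono ?_ _ _ hv)
  rintro a b ⟨ha, hb, hE, hf⟩
  exact ⟨ha, hb, hE, by rw [← h a ha, ← h b hb]; exact hf⟩

lemma good_flip {E : V → V → Prop} {S : Set V} {f : V → Fin 2}
    (h : Good E S f) : Good (flip E) S f := by
  intro v hv
  apply h v
  have h2 : Relation.TransGen (Function.swap (Rel E S f)) v v := by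
    refine Relation.TransGen.mono ?_ _ _ hv
    rintro a b ⟨ha, hb, hE, hf⟩
    exact ⟨hb, ha, hE, hf.symm⟩
  exact Relation.transGen_swap.mp h2

lemma good_flip_iff {E : V → V → Prop} {S : Set V} {f : V → Fin 2} :
    Good (flip E) S f ↔ Good E S f :=
  ⟨fun h => by have := good_flip (E := flip E) h; exact this, good_flip⟩

lemma exists_first_step {R : V → V → Prop} {a b : V}
    (h : Relation.TransGen R a b) : ∃ t, R a t := by
  induction h with
  | single h => exact ⟨_, h⟩
  | tail _ _ ih => exact ih

lemma avoid_target_ne {R : V → V → Prop} {v a b : V}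
    (h : Relation.TransGen (fun x y => R x y ∧ x ≠ v ∧ y ≠ v) a b) : b ≠ v := by
  induction h with
  | single h => exact h.2.2
  | tail _ h _ => exact h.2.2

lemma avoid {R : V → V → Prop} {v : V} (hv : ∀ t, ¬ R v t) {a b : V}
    (h : Relation.TransGen R a b) (ha : a ≠ v) :
    Relation.TransGen (fun x y => R x y ∧ x ≠ v ∧ y ≠ v) a b ∨ b = v := by
  induction h with
  | @single b h1 =>
    by_cases hb : b = v
    · exact Or.inr hb
    · exact Or.inl (Relation.TransGen.single ⟨h1, ha, hb⟩)
  | @tail b c h1 h2 ih =>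
    rcases ih with h3 | h3
    · have hb : b ≠ v := avoid_target_ne h3
      by_cases hc : c = v
      · exact Or.inr hc
      · exact Or.inl (h3.tail ⟨h2, hb, hc⟩)
    · exact absurd h2 (h3 ▸ hv c)

/-- insertion of a vertex, protecting the out-side -/
lemma good_insert_out {E : V → V → Prop} {S : Set V} {f : V → Fin 2} {v : V}
    (h1 : ∀ a b, E a b → ¬ E b a) (hg : Good E S f) (hv : v ∉ S)
    (hpro : ∀ t ∈ S, E v t → f t ≠ f v) : Good E (insert v S) f := by
  have hstep : ∀ t, ¬ Rel E (insert v S) f v t := by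
    rintro t ⟨_, ht, hE, hf⟩
    rcases ht with rfl | ht
    · exact h1 t t hE hE
    · exact hpro t ht hE hf.symm
  intro u hu
  by_cases huv : u = v
  · subst huv
    obtain ⟨t, ht⟩ := exists_first_step hu
    exact hstep t ht
  · rcases avoid hstep hu huv with h | h
    · refine hg u (Relation.TransGen.mono ?_ _ _ h)
      rintro a b ⟨⟨ha, hb, hE, hf⟩, hav, hbv⟩
      have ha' : a ∈ S := by rcases ha with rfl | ha; exact absurd rfl hav; exact ha
      have hb' : b ∈ S := by rcases hb with rfl | hb; exact absurd rfl hbv; exact hb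
      exact ⟨ha', hb', hE, hf⟩
    · exact huv h

/-- insertion of a vertex, protecting the in-side -/
lemma good_insert_in {E : V → V → Prop} {S : Set V} {f : V → Fin 2} {v : V}
    (h1 : ∀ a b, E a b → ¬ E b a) (hg : Good E S f) (hv : v ∉ S)
    (hpro : ∀ t ∈ S, E t v → f t ≠ f v) : Good E (insert v S) f := by
  have := good_insert_out (E := flip E) (fun a b hab hba => h1 b a hab hba)
    (good_flip hg) hv (fun t ht hE => hpro t ht hE)
  exact good_flip_iff.mp this

lemma fin2_ne_sub (a : Fin 2) : a ≠ 1 - a := by revert a; decide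

lemma fin2_eq_sub {a b : Fin 2} (h : a ≠ b) : b = 1 - a := by revert h; revert a b; decide

lemma insert_insert_diff {S : Set V} {p q : V} (hpS : p ∈ S) (hqS : q ∈ S) :
    insert p (insert q (S \ ({p, q} : Set V))) = S := by
  ext t
  simp only [Set.mem_insert_iff, Set.mem_diff, Set.mem_singleton_iff]
  constructor
  · rintro (rfl | rfl | ⟨h, _⟩)
    · exact hpS
    · exact hqS
    · exact h
  · intro htS
    by_cases htp : t = p
    · exact Or.inl htp
    · by_cases htq : t = q
      · exact Or.inr (Or.inl htq)
      · exact Or.inr (Or.inr ⟨htS, by tauto⟩)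

lemma aux_noq {E : V → V → Prop} (h1 : ∀ a b, E a b → ¬ E b a)
    {S : Set V} {p q wp : V} {g : V → Fin 2}
    (hpS : p ∈ S) (hqS : q ∈ S) (hpq : p ≠ q)
    (hwp : ∀ t ∈ S, E p t → t = wp)
    (hg : Good E (S \ ({p, q} : Set V)) g)
    (hq0 : ¬ ∃ t ∈ S \ ({p, q} : Set V), E q t) :
    ∃ f, Good E S f ∧ f p = f q := by
  classical
  set S' := S \ ({p, q} : Set V) with hS'def
  have hpS' : p ∉ S' := fun h => h.2 (Or.inl rfl)
  have hqS' : q ∉ S' := fun h => h.2 (Or.inr rfl)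
  set c : Fin 2 := if ∃ t ∈ S', E p t then 1 - g wp else 0 with hcdef
  set f : V → Fin 2 := fun t => if t = p ∨ t = q then c else g t with hfdef
  have hfS' : ∀ t ∈ S', f t = g t := by
    intro t ht
    have : ¬ (t = p ∨ t = q) := by
      rintro (rfl | rfl)
      · exact hpS' ht
      · exact hqS' ht
    simp only [hfdef, if_neg this]
  have hfp : f p = c := by simp [hfdef]
  have hfq : f q = c := by simp [hfdef]
  have hGood' : Good E S' f := good_congr hfS' hg
  have hproP : ∀ t ∈ S', E p t → f t ≠ f p := by
    intro t ht hE
    have hp' : ∃ t ∈ S', E p t := ⟨t, ht, hE⟩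
    have htwp : t = wp := hwp t ht.1 hE
    rw [hfS' t ht, hfp, hcdef, if_pos hp', htwp]
    exact fin2_ne_sub (g wp)
  have hproQ : ∀ t ∈ S', ¬ E q t := fun t ht hE => hq0 ⟨t, ht, hE⟩
  have hfeq : f p = f q := by rw [hfp, hfq]
  by_cases hqp : E q p
  · have hpq' : ¬ E p q := h1 q p hqp
    have hGq : Good E (insert q S') f :=
      good_insert_out h1 hGood' hqS' (fun t ht hE => absurd hE (hproQ t ht))
    have hpmem : p ∉ insert q S' := by
      rintro (rfl | h)
      · exact hpq rfl
      · exact hpS' h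
    have hGp : Good E (insert p (insert q S')) f := by
      refine good_insert_out h1 hGq hpmem ?_
      rintro t (rfl | ht) hE
      · exact absurd hE hpq'
      · exact hproP t ht hE
    have hset : insert p (insert q S') = S := insert_insert_diff hpS hqS
    exact ⟨f, hset ▸ hGp, hfeq⟩
  · have hGp : Good E (insert p S') f := good_insert_out h1 hGood' hpS' hproP
    have hqmem : q ∉ insert p S' := by
      rintro (rfl | h)
      · exact hpq rfl
      · exact hqS' h
    have hGq : Good E (insert q (insert p S')) f := by
      refine good_insert_out h1 hGp hqmem ?_
      rintro t (rfl | ht) hE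
      · exact absurd hE hqp
      · exact absurd hE (hproQ t ht)
    have hset : insert q (insert p S') = S := by
      rw [hS'def, Set.pair_comm p q]
      exact insert_insert_diff hqS hpS
    exact ⟨f, hset ▸ hGq, hfeq⟩

lemma descent [Fintype V] :
    ∀ (k : ℕ) (E : V → V → Prop),
    (∀ a b, E a b → ¬ E b a) →
    (∀ v : V, ∃ a b : V, ∀ t, E v t → t = a ∨ t = b) →
    (∀ v : V, ∃ a b : V, ∀ t, E t v → t = a ∨ t = b) →
    (∀ S : Set V, S ≠ Set.univ → ∃ f, Good E S f) →
    ∀ (S : Set V) (p q wp wq : V), S.ncard ≤ k →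
      p ∈ S → q ∈ S → p ≠ q →
      (∀ t ∈ S, E p t → t = wp) → (∀ t ∈ S, E q t → t = wq) →
      (∀ f, Good E S f → f p ≠ f q) → False := by
  intro k
  induction k with
  | zero =>
    intro E _ _ _ _ S p q wp wq hk hpS _ _ _ _ _
    have hS : S = ∅ := (Set.ncard_eq_zero (Set.toFinite S)).mp (Nat.le_zero.mp hk)
    exact absurd hpS (hS ▸ Set.notMem_empty p)
  | succ k ih =>
    intro E h1 hout2 hin2 hcol S p q wp wq hk hpS hqS hpq hwp hwq Hneq
    classical
    set S' := S \ ({p, q} : Set V) with hS'def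
    have hpS' : p ∉ S' := fun h => h.2 (Or.inl rfl)
    have hqS' : q ∉ S' := fun h => h.2 (Or.inr rfl)
    have hS'ne : S' ≠ Set.univ := fun h => hpS' (h ▸ Set.mem_univ p)
    obtain ⟨g, hg⟩ := hcol S' hS'ne
    by_cases hq0 : ∃ t ∈ S', E q t
    · by_cases hp0 : ∃ t ∈ S', E p t
      · -- both p and q have an out-neighbour in S'
        obtain ⟨t0, ht0, hEt0⟩ := hp0
        have ht0wp := hwp t0 ht0.1 hEt0
        subst ht0wp
        obtain ⟨t1, ht1, hEt1⟩ := hq0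
        have ht1wq := hwq t1 ht1.1 hEt1
        subst ht1wq
        -- so wp := t0 ∈ S', E p t0 ; wq := t1 ∈ S', E q t1
        by_cases hcase : ∃ f0, Good E S' f0 ∧ f0 t0 = f0 t1
        · obtain ⟨g0, hg0, heq0⟩ := hcase
          set f : V → Fin 2 := fun t => if t = p ∨ t = q then 1 - g0 t0 else g0 t with hfdef
          have hfS' : ∀ t ∈ S', f t = g0 t := by
            intro t ht
            have : ¬ (t = p ∨ t = q) := by
              rintro (rfl | rfl)
              · exact hpS' ht
              · exact hqS' ht
            simp only [hfdef, if_neg this]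
          have hfp : f p = 1 - g0 t0 := by simp [hfdef]
          have hfq : f q = 1 - g0 t0 := by simp [hfdef]
          have hGood' : Good E S' f := good_congr hfS' hg0
          have hpq' : ¬ E p q := by
            intro hE
            exact hqS' ((hwp q hqS hE) ▸ ht0)
          have hqp' : ¬ E q p := by
            intro hE
            exact hpS' ((hwq p hpS hE) ▸ ht1)
          have hGp : Good E (insert p S') f := by
            refine good_insert_out h1 hGood' hpS' ?_
            intro t ht hE
            rw [hwp t ht.1 hE, hfS' t0 ht0, hfp]
            exact fin2_ne_sub (g0 t0)
          have hqmem : q ∉ insert p S' := by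
            rintro (rfl | h)
            · exact hpq rfl
            · exact hqS' h
          have hGq : Good E (insert q (insert p S')) f := by
            refine good_insert_out h1 hGp hqmem ?_
            rintro t (rfl | ht) hE
            · exact absurd hE hqp'
            · rw [hwq t ht.1 hE, hfS' t1 ht1, hfq, ← heq0]
              exact fin2_ne_sub (g0 t0)
          have hset : insert q (insert p S') = S := by
            rw [hS'def, Set.pair_comm p q]
            exact insert_insert_diff hqS hpS
          have : f p = f q := by rw [hfp, hfq]
          exact Hneq f (hset ▸ hGq) this
        · have Hneq' : ∀ f, Good E S' f → f t0 ≠ f t1 :=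
            fun f hf h => hcase ⟨f, hf, h⟩
          have hwpwq : t0 ≠ t1 := by
            rintro rfl
            exact Hneq' g hg rfl
          obtain ⟨a, b, hab⟩ := hin2 t0
          have hpab : p = a ∨ p = b := hab p hEt0
          obtain ⟨a', b', hab'⟩ := hin2 t1
          have hqab : q = a' ∨ q = b' := hab' q hEt1
          have hinvp : ∀ t ∈ S', E t t0 → t = (if p = a then b else a) := by
            intro t ht hE
            have h2 := hab t hE
            have htp : t ≠ p := fun h => hpS' (h ▸ ht)
            by_cases hpa : p = a
            · rw [if_pos hpa]
              rcases h2 with h2 | h2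
              · exact absurd (h2.trans hpa.symm) htp
              · exact h2
            · have hpb : p = b := hpab.resolve_left hpa
              rw [if_neg hpa]
              rcases h2 with h2 | h2
              · exact h2
              · exact absurd (h2.trans hpb.symm) htp
          have hinvq : ∀ t ∈ S', E t t1 → t = (if q = a' then b' else a') := by
            intro t ht hE
            have h2 := hab' t hE
            have htq : t ≠ q := fun h => hqS' (h ▸ ht)
            by_cases hqa : q = a'
            · rw [if_pos hqa]
              rcases h2 with h2 | h2
              · exact absurd (h2.trans hqa.symm) htq
              · exact h2
            · have hqb : q = b' := hqab.resolve_left hqa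
              rw [if_neg hqa]
              rcases h2 with h2 | h2
              · exact h2
              · exact absurd (h2.trans hqb.symm) htq
          have hlt : S'.ncard < S.ncard := by
            refine Set.ncard_lt_ncard ?_ (Set.toFinite S)
            exact (Set.ssubset_iff_of_subset Set.diff_subset).mpr ⟨p, hpS, hpS'⟩
          refine ih (flip E) (fun a b hab hba => h1 b a hab hba) hin2 hout2
            (fun T hT => (hcol T hT).imp (fun f hf => good_flip hf))
            S' t0 t1 (if p = a then b else a) (if q = a' then b' else a')
            (by omega) ht0 ht1 hwpwq hinvp hinvq
            (fun f hf => Hneq' f (good_flip_iff.mp hf))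
      · -- p has no out-neighbour in S' : use aux with roles swapped
        have hg' : Good E (S \ ({q, p} : Set V)) g := by
          rwa [Set.pair_comm q p]
        have hp0' : ¬∃ t ∈ S \ ({q, p} : Set V), E p t := by
          rw [Set.pair_comm q p]; exact hp0
        obtain ⟨f, hf, hfeq⟩ := aux_noq h1 hqS hpS hpq.symm hwq hg' hp0'
        exact Hneq f hf hfeq.symm
    · obtain ⟨f, hf, hfeq⟩ := aux_noq h1 hpS hqS hpq hwp hg hq0
      exact Hneq f hf hfeq

lemma other_mem {α : Type*} {P : α → Prop} {z u1 u2 : α} (h1 : P u1) (h2 : P u2) :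
    P (if z = u1 then u2 else u1) := by split <;> assumption

lemma other_ne {α : Type*} {z u1 u2 : α} (h12 : u1 ≠ u2) (hz : z = u1 ∨ z = u2) :
    (if z = u1 then u2 else u1) ≠ z := by
  by_cases h : z = u1
  · rw [if_pos h]
    intro h2
    exact h12 (h2.trans h).symm
  · rw [if_neg h]
    intro h2
    exact h h2.symm

lemma other_forced {α : Type*} {z u1 u2 t : α} (hz : z = u1 ∨ z = u2)
    (ht : t = u1 ∨ t = u2) (htz : t ≠ z) : t = (if z = u1 then u2 else u1) := by
  by_cases h : z = u1
  · rw [if_pos h]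
    rcases ht with h3 | h3
    · exact absurd (h3.trans h.symm) htz
    · exact h3
  · rw [if_neg h]
    have hz2 : z = u2 := hz.resolve_left h
    rcases ht with h3 | h3
    · exact h3
    · exact absurd (h3.trans hz2.symm) htz

lemma pair_resolve {α : Type*} {v1 v2 z x t : α} (hz : z = v1 ∨ z = v2)
    (hx : x = v1 ∨ x = v2) (hzx : z ≠ x) (ht : t = v1 ∨ t = v2) : t = z ∨ t = x := by
  rcases ht with h3 | h3
  · rcases hz with h | h
    · exact Or.inl (h3.trans h.symm)
    · rcases hx with h2 | h2
      · exact Or.inr (h3.trans h2.symm)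
      · exact absurd (h.trans h2.symm) hzx
  · rcases hz with h | h
    · rcases hx with h2 | h2
      · exact absurd (h.trans h2.symm) hzx
      · exact Or.inr (h3.trans h2.symm)
    · exact Or.inl (h3.trans h.symm)


lemma core [Fintype V] [Nonempty V] {E : V → V → Prop}
    (h1 : ∀ a b, E a b → ¬ E b a)
    (hOutE : ∀ v : V, ∃ x y : V, x ≠ y ∧ E v x ∧ E v y ∧ ∀ t, E v t → t = x ∨ t = y)
    (hInE : ∀ v : V, ∃ x y : V, x ≠ y ∧ E x v ∧ E y v ∧ ∀ t, E t v → t = x ∨ t = y)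
    (hcol : ∀ S : Set V, S ≠ Set.univ → ∃ f, Good E S f) :
    ∃ f, Good E Set.univ f := by
  classical
  by_contra hno
  push_neg at hno
  have hw_out : ∀ v : V, ∃ a b : V, ∀ t, E v t → t = a ∨ t = b := by
    intro v; obtain ⟨a, b, _, _, _, h⟩ := hOutE v; exact ⟨a, b, h⟩
  have hw_in : ∀ v : V, ∃ a b : V, ∀ t, E t v → t = a ∨ t = b := by
    intro v; obtain ⟨a, b, _, _, _, h⟩ := hInE v; exact ⟨a, b, h⟩
  obtain ⟨z⟩ := (inferInstance : Nonempty V)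
  obtain ⟨x, y, hxy, hEzx, hEzy, hzout⟩ := hOutE z
  obtain ⟨c, d, hcd, hEcz, hEdz, hzin⟩ := hInE z
  have hloop : ∀ v, ¬ E v v := fun v h => h1 v v h h
  have hxz : x ≠ z := fun h => hloop z (h ▸ hEzx)
  have hyz : y ≠ z := fun h => hloop z (h ▸ hEzy)
  have hcz : c ≠ z := fun h => hloop z (h ▸ hEcz)
  have hdz : d ≠ z := fun h => hloop z (h ▸ hEdz)
  have hcx : c ≠ x := fun h => h1 z x hEzx (h ▸ hEcz)
  have hcy : c ≠ y := fun h => h1 z y hEzy (h ▸ hEcz)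
  have hdx : d ≠ x := fun h => h1 z x hEzx (h ▸ hEdz)
  have hdy : d ≠ y := fun h => h1 z y hEzy (h ▸ hEdz)
  set S0 : Set V := {t | t ≠ z ∧ t ≠ x ∧ t ≠ y} with hS0def
  have hzS0 : z ∉ S0 := fun h => h.1 rfl
  have hxS0 : x ∉ S0 := fun h => h.2.1 rfl
  have hyS0 : y ∉ S0 := fun h => h.2.2 rfl
  have hS0ne : S0 ≠ Set.univ := by
    intro h
    exact hzS0 (h ▸ Set.mem_univ z)
  have hcS0 : c ∈ S0 := ⟨hcz, hcx, hcy⟩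
  have hdS0 : d ∈ S0 := ⟨hdz, hdx, hdy⟩
  -- the second in-neighbour of x (besides z)
  obtain ⟨u1, u2, hu12, hu1x, hu2x, hux⟩ := hInE x
  have hzu : z = u1 ∨ z = u2 := hux z hEzx
  set x' : V := if z = u1 then u2 else u1 with hx'def
  have hEx'x : E x' x := other_mem (P := fun t => E t x) hu1x hu2x
  have hx'z : x' ≠ z := other_ne hu12 hzu
  have hinx : ∀ t, E t x → t ≠ z → t = x' := fun t hE htz =>
    other_forced hzu (hux t hE) htz
  have hx'x : x' ≠ x := fun h => hloop x (h ▸ hEx'x)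
  -- the second in-neighbour of y (besides z)
  obtain ⟨v1, v2, hv12, hv1y, hv2y, hvy⟩ := hInE y
  have hzv : z = v1 ∨ z = v2 := hvy z hEzy
  set y' : V := if z = v1 then v2 else v1 with hy'def
  have hEy'y : E y' y := other_mem (P := fun t => E t y) hv1y hv2y
  have hy'z : y' ≠ z := other_ne hv12 hzv
  have hiny : ∀ t, E t y → t ≠ z → t = y' := fun t hE htz =>
    other_forced hzv (hvy t hE) htz
  have hy'y : y' ≠ y := fun h => hloop y (h ▸ hEy'y)
  -- there is a colouring of S0 making c and d equal
  have hcdEq : ∃ g, Good E S0 g ∧ g c = g d := by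
    by_contra hcase
    obtain ⟨a1, b1, _, _, _, hbnd1⟩ := hOutE c
    have hza1 : z = a1 ∨ z = b1 := hbnd1 z hEcz
    obtain ⟨a2, b2, _, _, _, hbnd2⟩ := hOutE d
    have hza2 : z = a2 ∨ z = b2 := hbnd2 z hEdz
    have hinvc : ∀ t ∈ S0, E c t → t = (if z = a1 then b1 else a1) := by
      intro t ht hE
      exact other_forced hza1 (hbnd1 t hE) ht.1
    have hinvd : ∀ t ∈ S0, E d t → t = (if z = a2 then b2 else a2) := by
      intro t ht hE
      exact other_forced hza2 (hbnd2 t hE) ht.1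
    exact descent S0.ncard E h1 hw_out hw_in hcol S0 c d _ _ le_rfl hcS0 hdS0 hcd
      hinvc hinvd (fun g hg heq => hcase ⟨g, hg, heq⟩)
  have hsetzyx : insert z (insert y (insert x S0)) = Set.univ := by
    ext t
    simp only [Set.mem_insert_iff, Set.mem_univ, iff_true]
    by_cases h1t : t = z
    · exact Or.inl h1t
    · by_cases h2t : t = y
      · exact Or.inr (Or.inl h2t)
      · by_cases h3t : t = x
        · exact Or.inr (Or.inr (Or.inl h3t))
        · exact Or.inr (Or.inr (Or.inr ⟨h1t, h3t, h2t⟩))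
  have hsetzxy : insert z (insert x (insert y S0)) = Set.univ := by
    ext t
    simp only [Set.mem_insert_iff, Set.mem_univ, iff_true]
    by_cases h1t : t = z
    · exact Or.inl h1t
    · by_cases h2t : t = x
      · exact Or.inr (Or.inl h2t)
      · by_cases h3t : t = y
        · exact Or.inr (Or.inr (Or.inl h3t))
        · exact Or.inr (Or.inr (Or.inr ⟨h1t, h2t, h3t⟩))
  by_cases hExy : E x y
  · -- Case B : arc x → y ; extend a colouring equalising c and d
    have hEyx : ¬ E y x := h1 x y hExy
    have hx'y : x' ≠ y := fun h => hEyx (h ▸ hEx'x)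
    have hx'S0 : x' ∈ S0 := ⟨hx'z, hx'x, hx'y⟩
    have hxzv : x = v1 ∨ x = v2 := hvy x hExy
    have hinyzx : ∀ t, E t y → t = z ∨ t = x := fun t hE =>
      pair_resolve hzv hxzv (fun h => hxz h.symm) (hvy t hE)
    obtain ⟨g, hgood, heq⟩ := hcdEq
    set f : V → Fin 2 := fun t =>
      if t = x then 1 - g x' else if t = y then g x' else if t = z then 1 - g c else g t
      with hfdef
    have hfS0 : ∀ t ∈ S0, f t = g t := by
      intro t ht
      simp only [hfdef]
      rw [if_neg ht.2.1, if_neg ht.2.2, if_neg ht.1]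
    have hfx : f x = 1 - g x' := by simp [hfdef]
    have hfy : f y = g x' := by
      simp [hfdef, Ne.symm hxy]
    have hfz : f z = 1 - g c := by
      simp [hfdef, Ne.symm hxz, Ne.symm hyz]
    have hG0 : Good E S0 f := good_congr hfS0 hgood
    have hGx : Good E (insert x S0) f := by
      refine good_insert_in h1 hG0 hxS0 ?_
      intro t ht hE
      rw [hinx t hE ht.1, hfS0 x' hx'S0, hfx]
      exact fin2_ne_sub (g x')
    have hymem : y ∉ insert x S0 := by
      rintro (h | h)
      · exact hxy h.symm
      · exact hyS0 h
    have hGy : Good E (insert y (insert x S0)) f := by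
      refine good_insert_in h1 hGx hymem ?_
      intro t ht hE
      rcases hinyzx t hE with h | h
      · rw [h] at ht
        rcases ht with h' | h'
        · exact absurd h'.symm hxz
        · exact absurd h' hzS0
      · rw [h, hfx, hfy]
        exact Ne.symm (fin2_ne_sub (g x'))
    have hzmem : z ∉ insert y (insert x S0) := by
      rintro (h | h | h)
      · exact hyz h.symm
      · exact hxz h.symm
      · exact hzS0 h
    have hGz : Good E (insert z (insert y (insert x S0))) f := by
      refine good_insert_in h1 hGy hzmem ?_
      intro t ht hE
      rcases hzin t hE with h | h
      · rw [h, hfS0 c hcS0, hfz]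
        exact fin2_ne_sub (g c)
      · rw [h, hfS0 d hdS0, hfz, ← heq]
        exact fin2_ne_sub (g c)
    exact hno f (hsetzyx ▸ hGz)
  · by_cases hEyx : E y x
    · -- Case B' : arc y → x
      have hy'x : y' ≠ x := fun h => hExy (h ▸ hEy'y)
      have hy'S0 : y' ∈ S0 := ⟨hy'z, hy'x, hy'y⟩
      have hyzu : y = u1 ∨ y = u2 := hux y hEyx
      have hinxzy : ∀ t, E t x → t = z ∨ t = y := fun t hE =>
        pair_resolve hzu hyzu (fun h => hyz h.symm) (hux t hE)
      obtain ⟨g, hgood, heq⟩ := hcdEq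
      set f : V → Fin 2 := fun t =>
        if t = y then 1 - g y' else if t = x then g y' else if t = z then 1 - g c else g t
        with hfdef
      have hfS0 : ∀ t ∈ S0, f t = g t := by
        intro t ht
        simp only [hfdef]
        rw [if_neg ht.2.2, if_neg ht.2.1, if_neg ht.1]
      have hfy : f y = 1 - g y' := by simp [hfdef]
      have hfx : f x = g y' := by
        simp [hfdef, hxy]
      have hfz : f z = 1 - g c := by
        simp [hfdef, Ne.symm hyz, Ne.symm hxz]
      have hG0 : Good E S0 f := good_congr hfS0 hgood
      have hGy : Good E (insert y S0) f := by
        refine good_insert_in h1 hG0 hyS0 ?_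
        intro t ht hE
        rw [hiny t hE ht.1, hfS0 y' hy'S0, hfy]
        exact fin2_ne_sub (g y')
      have hxmem : x ∉ insert y S0 := by
        rintro (h | h)
        · exact hxy h
        · exact hxS0 h
      have hGx : Good E (insert x (insert y S0)) f := by
        refine good_insert_in h1 hGy hxmem ?_
        intro t ht hE
        rcases hinxzy t hE with h | h
        · rw [h] at ht
          rcases ht with h' | h'
          · exact absurd h'.symm hyz
          · exact absurd h' hzS0
        · rw [h, hfy, hfx]
          exact Ne.symm (fin2_ne_sub (g y'))
      have hzmem : z ∉ insert x (insert y S0) := by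
        rintro (h | h | h)
        · exact hxz h.symm
        · exact hyz h.symm
        · exact hzS0 h
      have hGz : Good E (insert z (insert x (insert y S0))) f := by
        refine good_insert_in h1 hGx hzmem ?_
        intro t ht hE
        rcases hzin t hE with h | h
        · rw [h, hfS0 c hcS0, hfz]
          exact fin2_ne_sub (g c)
        · rw [h, hfS0 d hdS0, hfz, ← heq]
          exact fin2_ne_sub (g c)
      exact hno f (hsetzxy ▸ hGz)
    · -- Case A : x and y are non-adjacent
      have hx'y : x' ≠ y := fun h => hEyx (h ▸ hEx'x)
      have hx'S0 : x' ∈ S0 := ⟨hx'z, hx'x, hx'y⟩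
      have hy'x : y' ≠ x := fun h => hExy (h ▸ hEy'y)
      have hy'S0 : y' ∈ S0 := ⟨hy'z, hy'x, hy'y⟩
      by_cases hcase : ∃ g, Good E S0 g ∧ g x' = g y'
      · obtain ⟨g, hgood, heq⟩ := hcase
        set f : V → Fin 2 := fun t =>
          if t = z then g x' else if t = x ∨ t = y then 1 - g x' else g t
          with hfdef
        have hfS0 : ∀ t ∈ S0, f t = g t := by
          intro t ht
          simp only [hfdef]
          rw [if_neg ht.1, if_neg (fun h => h.elim (fun hh => ht.2.1 hh) (fun hh => ht.2.2 hh))]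
        have hfx : f x = 1 - g x' := by
          simp [hfdef, hxz]
        have hfy : f y = 1 - g x' := by
          simp [hfdef, hyz, Ne.symm hxy]
        have hfz : f z = g x' := by simp [hfdef]
        have hG0 : Good E S0 f := good_congr hfS0 hgood
        have hGx : Good E (insert x S0) f := by
          refine good_insert_in h1 hG0 hxS0 ?_
          intro t ht hE
          rw [hinx t hE ht.1, hfS0 x' hx'S0, hfx]
          exact fin2_ne_sub (g x')
        have hymem : y ∉ insert x S0 := by
          rintro (h | h)
          · exact hxy h.symm
          · exact hyS0 h
        have hGy : Good E (insert y (insert x S0)) f := by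
          refine good_insert_in h1 hGx hymem ?_
          intro t ht hE
          rcases ht with h | ht
          · rw [h] at hE
            exact absurd hE hExy
          · rw [hiny t hE ht.1, hfS0 y' hy'S0, hfy, heq]
            exact fin2_ne_sub (g y')
        have hzmem : z ∉ insert y (insert x S0) := by
          rintro (h | h | h)
          · exact hyz h.symm
          · exact hxz h.symm
          · exact hzS0 h
        have hGz : Good E (insert z (insert y (insert x S0))) f := by
          refine good_insert_out h1 hGy hzmem ?_
          intro t ht hE
          rcases hzout t hE with h | h
          · rw [h, hfx, hfz]
            exact Ne.symm (fin2_ne_sub (g x'))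
          · rw [h, hfy, hfz]
            exact Ne.symm (fin2_ne_sub (g x'))
        exact hno f (hsetzyx ▸ hGz)
      · have Hneq' : ∀ g, Good E S0 g → g x' ≠ g y' :=
          fun g hg heq => hcase ⟨g, hg, heq⟩
        have hx'y' : x' ≠ y' := by
          intro h
          obtain ⟨g, hg⟩ := hcol S0 hS0ne
          exact Hneq' g hg (by rw [h])
        obtain ⟨a1, b1, _, _, _, hbnd1⟩ := hOutE x'
        have hxa1 : x = a1 ∨ x = b1 := hbnd1 x hEx'x
        obtain ⟨a2, b2, _, _, _, hbnd2⟩ := hOutE y'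
        have hya2 : y = a2 ∨ y = b2 := hbnd2 y hEy'y
        have hinvx : ∀ t ∈ S0, E x' t → t = (if x = a1 then b1 else a1) := by
          intro t ht hE
          exact other_forced hxa1 (hbnd1 t hE) ht.2.1
        have hinvy : ∀ t ∈ S0, E y' t → t = (if y = a2 then b2 else a2) := by
          intro t ht hE
          exact other_forced hya2 (hbnd2 t hE) ht.2.2
        exact descent S0.ncard E h1 hw_out hw_in hcol S0 x' y' _ _ le_rfl hx'S0 hy'S0
          hx'y' hinvx hinvy Hneq'

section Glue

variable {V : Type*} [Fintype V]

lemma dicolourable_card (D : V → V → Prop) (h1 : ∀ a b, D a b → ¬ D b a) :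
    Dicolourable D (Fintype.card V) := by
  refine ⟨fun v => (Fintype.equivFin V) v, ?_⟩
  intro i v hv
  obtain ⟨t, ht⟩ := exists_first_step hv
  obtain ⟨hv', ht', hD⟩ := ht
  have hvt : v = t := (Fintype.equivFin V).injective (by
    have h1' : (Fintype.equivFin V) v = i := hv'
    have h2' : (Fintype.equivFin V) t = i := ht'
    rw [h1', h2'])
  subst hvt
  exact h1 v v hD hD

lemma dicolourable_mono {D : V → V → Prop} {j k : ℕ} (h : Dicolourable D j) (hjk : j ≤ k) :
    Dicolourable D k := by
  obtain ⟨f, hf⟩ := h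
  refine ⟨fun v => Fin.castLE hjk (f v), ?_⟩
  intro i v hv
  obtain ⟨t, ⟨hv', _, _⟩⟩ := exists_first_step hv
  refine hf (f v) v (Relation.TransGen.mono ?_ _ _ hv)
  rintro a b ⟨ha, hb, hD⟩
  have ha' : f a = f v := Fin.castLE_injective hjk (by
    have h1' : Fin.castLE hjk (f a) = i := ha
    have h2' : Fin.castLE hjk (f v) = i := hv'
    rw [h1', h2'])
  have hb' : f b = f v := Fin.castLE_injective hjk (by
    have h1' : Fin.castLE hjk (f b) = i := hb
    have h2' : Fin.castLE hjk (f v) = i := hv'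
    rw [h1', h2'])
  exact ⟨ha', hb', hD⟩

lemma dicolourable_two {R : V → V → Prop} (h1 : ∀ a b, R a b → ¬ R b a)
    (hlt : dichi R < 3) : Dicolourable R 2 := by
  have hne : {k | Dicolourable R k}.Nonempty := ⟨_, dicolourable_card R h1⟩
  have hmem := Nat.sInf_mem hne
  unfold dichi at hlt
  exact dicolourable_mono hmem (by omega)

lemma good_of_dicolourable_restrict {D : V → V → Prop} {S : Set V} {f : V → Fin 2}
    (hf : ∀ i, AcyclicOn (fun a b => a ∈ S ∧ b ∈ S ∧ D a b) {v | f v = i}) :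
    Good D S f := by
  intro v hv
  have key : ∀ b, Relation.TransGen (Rel D S f) v b →
      f b = f v ∧ Relation.TransGen
        (fun a b => (a ∈ {u | f u = f v}) ∧ (b ∈ {u | f u = f v}) ∧
          (a ∈ S ∧ b ∈ S ∧ D a b)) v b := by
    intro b hb
    induction hb with
    | single h =>
      obtain ⟨ha, hb', hD, hfe⟩ := h
      exact ⟨hfe.symm, Relation.TransGen.single ⟨rfl, hfe.symm, ha, hb', hD⟩⟩
    | @tail b c h1' h2 ih =>
      obtain ⟨hfb, htg⟩ := ih
      obtain ⟨ha, hb', hD, hfe⟩ := h2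
      have hfc : f c = f v := by rw [← hfe]; exact hfb
      exact ⟨hfc, htg.tail ⟨hfb, hfc, ha, hb', hD⟩⟩
  exact hf (f v) v (key v hv).2

lemma dicolourable_of_good {D : V → V → Prop} {f : V → Fin 2}
    (h : Good D Set.univ f) : Dicolourable D 2 := by
  refine ⟨f, fun i v hv => h v (Relation.TransGen.mono ?_ _ _ hv)⟩
  rintro a b ⟨ha, hb, hD⟩
  have ha' : f a = i := ha
  have hb' : f b = i := hb
  exact ⟨trivial, trivial, hD, by rw [ha', hb']⟩

lemma hcol_of_crit {D : V → V → Prop} (hor : OrientedGraph D) (hcrit : Dicritical D 3) :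
    ∀ S : Set V, S ≠ Set.univ → ∃ f, Good D S f := by
  intro S hS
  have hlt : dichi (fun a b => a ∈ S ∧ b ∈ S ∧ D a b) < 3 :=
    hcrit.2 S _ (fun a b h => h) (fun h => hS h.1)
  have h1R : ∀ a b, (fun a b => a ∈ S ∧ b ∈ S ∧ D a b) a b →
      ¬ (fun a b => a ∈ S ∧ b ∈ S ∧ D a b) b a :=
    fun a b hab hba => hor a b hab.2.2 hba.2.2
  obtain ⟨f, hf⟩ := dicolourable_two h1R hlt
  exact ⟨f, good_of_dicolourable_restrict hf⟩

lemma not_dicolourable_two {D : V → V → Prop} (hcrit : Dicritical D 3) :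
    ¬ Dicolourable D 2 := by
  intro h
  have h2 : dichi D ≤ 2 := Nat.sInf_le h
  rw [hcrit.1] at h2
  omega

lemma insert_compl_eq_univ {v : V} : insert v {t : V | t ≠ v} = Set.univ := by
  ext t
  refine ⟨fun _ => trivial, fun _ => ?_⟩
  by_cases h : t = v
  · exact Or.inl h
  · exact Or.inr h

lemma outdeg_ge_two {D : V → V → Prop} (hor : OrientedGraph D) (hcrit : Dicritical D 3)
    (v : V) : 2 ≤ outDeg D v := by
  classical
  by_contra hlt
  push_neg at hlt
  have hsub : ∀ a ∈ {w | D v w}, ∀ b ∈ {w | D v w}, a = b := by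
    have hn : ({w | D v w}).ncard ≤ 1 := by
      rw [← Nat.card_coe_set_eq]
      unfold outDeg at hlt
      omega
    exact (Set.ncard_le_one (Set.toFinite _)).mp hn
  set S := {t : V | t ≠ v} with hSdef
  have hvS : v ∉ S := fun h => h rfl
  have hSne : S ≠ Set.univ := fun h => hvS (h ▸ Set.mem_univ v)
  obtain ⟨g, hg⟩ := hcol_of_crit hor hcrit S hSne
  set c : Fin 2 := if h : ∃ w, D v w then 1 - g h.choose else 0 with hcdef
  set f : V → Fin 2 := fun t => if t = v then c else g t with hfdef
  have hfS : ∀ t ∈ S, f t = g t := fun t ht => if_neg ht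
  have hfv : f v = c := by simp [hfdef]
  have hGS : Good D S f := good_congr hfS hg
  have hGv : Good D (insert v S) f := by
    refine good_insert_out hor hGS hvS ?_
    intro t ht hE
    have hex : ∃ w, D v w := ⟨t, hE⟩
    have hteq : t = hex.choose := hsub t hE _ hex.choose_spec
    rw [hfS t ht, hteq, hfv, hcdef, dif_pos hex]
    exact fin2_ne_sub _
  rw [hSdef, insert_compl_eq_univ] at hGv
  exact not_dicolourable_two hcrit (dicolourable_of_good hGv)

lemma indeg_ge_two {D : V → V → Prop} (hor : OrientedGraph D) (hcrit : Dicritical D 3)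
    (v : V) : 2 ≤ inDeg D v := by
  classical
  by_contra hlt
  push_neg at hlt
  have hsub : ∀ a ∈ {w | D w v}, ∀ b ∈ {w | D w v}, a = b := by
    have hn : ({w | D w v}).ncard ≤ 1 := by
      rw [← Nat.card_coe_set_eq]
      unfold inDeg at hlt
      omega
    exact (Set.ncard_le_one (Set.toFinite _)).mp hn
  set S := {t : V | t ≠ v} with hSdef
  have hvS : v ∉ S := fun h => h rfl
  have hSne : S ≠ Set.univ := fun h => hvS (h ▸ Set.mem_univ v)
  obtain ⟨g, hg⟩ := hcol_of_crit hor hcrit S hSne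
  set c : Fin 2 := if h : ∃ w, D w v then 1 - g h.choose else 0 with hcdef
  set f : V → Fin 2 := fun t => if t = v then c else g t with hfdef
  have hfS : ∀ t ∈ S, f t = g t := fun t ht => if_neg ht
  have hfv : f v = c := by simp [hfdef]
  have hGS : Good D S f := good_congr hfS hg
  have hGv : Good D (insert v S) f := by
    refine good_insert_in hor hGS hvS ?_
    intro t ht hE
    have hex : ∃ w, D w v := ⟨t, hE⟩
    have hteq : t = hex.choose := hsub t hE _ hex.choose_spec
    rw [hfS t ht, hteq, hfv, hcdef, dif_pos hex]
    exact fin2_ne_sub _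
  rw [hSdef, insert_compl_eq_univ] at hGv
  exact not_dicolourable_two hcrit (dicolourable_of_good hGv)

lemma numArcs_eq_sum_out (D : V → V → Prop) : numArcs D = ∑ v : V, outDeg D v := by
  classical
  have e : ↥{p : V × V | D p.1 p.2} ≃ (Σ v : V, ↥{w : V | D v w}) :=
    { toFun := fun x => ⟨x.1.1, x.1.2, x.2⟩
      invFun := fun s => ⟨(s.1, s.2.1), s.2.2⟩
      left_inv := fun x => rfl
      right_inv := fun s => rfl }
  unfold numArcs outDeg
  rw [Nat.card_congr e, Nat.card_eq_fintype_card, Fintype.card_sigma]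
  refine Finset.sum_congr rfl (fun v _ => ?_)
  exact (Nat.card_eq_fintype_card).symm

lemma numArcs_eq_sum_in (D : V → V → Prop) : numArcs D = ∑ v : V, inDeg D v := by
  classical
  have e : ↥{p : V × V | D p.1 p.2} ≃ (Σ v : V, ↥{w : V | D w v}) :=
    { toFun := fun x => ⟨x.1.2, x.1.1, x.2⟩
      invFun := fun s => ⟨(s.2.1, s.1), s.2.2⟩
      left_inv := fun x => rfl
      right_inv := fun s => rfl }
  unfold numArcs inDeg
  rw [Nat.card_congr e, Nat.card_eq_fintype_card, Fintype.card_sigma]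
  refine Finset.sum_congr rfl (fun v _ => ?_)
  exact (Nat.card_eq_fintype_card).symm

lemma all_eq_two {g : V → ℕ} (hge : ∀ v, 2 ≤ g v) (hsum : ∑ v : V, g v ≤ 20)
    (hn : 10 ≤ Fintype.card V) (v : V) : g v = 2 := by
  by_contra hne
  have h3 : 3 ≤ g v := by have := hge v; omega
  have hmem : v ∈ (Finset.univ : Finset V) := Finset.mem_univ v
  have hsplit : g v + ∑ x ∈ Finset.univ.erase v, g x = ∑ x : V, g x :=
    Finset.add_sum_erase _ g hmem
  have hbound : (Finset.univ.erase v).card • 2 ≤ ∑ x ∈ Finset.univ.erase v, g x :=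
    Finset.card_nsmul_le_sum _ _ _ (fun x _ => hge x)
  have hcard : (Finset.univ.erase v).card = Fintype.card V - 1 := by
    rw [Finset.card_erase_of_mem hmem, Finset.card_univ]
  rw [hcard] at hbound
  simp only [smul_eq_mul] at hbound
  omega

end Glue

end ThreeDicrit

/-- Every 3-dicritical oriented graph on at least 10 vertices has at least 21 arcs. -/
theorem three_dicritical_arc_bound {V : Type*} [Fintype V] (D : V → V → Prop)
    (hor : OrientedGraph D) (hcrit : Dicritical D 3)
    (hn : 10 ≤ Fintype.card V) : 21 ≤ numArcs D := by
  classical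
  by_contra hlt
  push_neg at hlt
  have hle : numArcs D ≤ 20 := by omega
  have hout2 : ∀ v, 2 ≤ outDeg D v := ThreeDicrit.outdeg_ge_two hor hcrit
  have hin2 : ∀ v, 2 ≤ inDeg D v := ThreeDicrit.indeg_ge_two hor hcrit
  have hsumout : ∑ v : V, outDeg D v ≤ 20 := by
    rw [← ThreeDicrit.numArcs_eq_sum_out]; exact hle
  have hsumin : ∑ v : V, inDeg D v ≤ 20 := by
    rw [← ThreeDicrit.numArcs_eq_sum_in]; exact hle
  have houte : ∀ v, outDeg D v = 2 := ThreeDicrit.all_eq_two hout2 hsumout hn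
  have hine : ∀ v, inDeg D v = 2 := ThreeDicrit.all_eq_two hin2 hsumin hn
  have hOutE : ∀ v : V, ∃ x y : V, x ≠ y ∧ D v x ∧ D v y ∧ ∀ t, D v t → t = x ∨ t = y := by
    intro v
    have h2 : ({w | D v w} : Set V).ncard = 2 := by
      rw [← Nat.card_coe_set_eq]; exact houte v
    obtain ⟨a, b, hab, hset⟩ := Set.ncard_eq_two.mp h2
    have hma : a ∈ ({w | D v w} : Set V) := by rw [hset]; exact Set.mem_insert a {b}
    have hmb : b ∈ ({w | D v w} : Set V) := by
      rw [hset]; exact Set.mem_insert_iff.mpr (Or.inr rfl)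
    refine ⟨a, b, hab, hma, hmb, fun t ht => ?_⟩
    have htm : t ∈ ({a, b} : Set V) := by rw [← hset]; exact ht
    exact htm
  have hInE : ∀ v : V, ∃ x y : V, x ≠ y ∧ D x v ∧ D y v ∧ ∀ t, D t v → t = x ∨ t = y := by
    intro v
    have h2 : ({w | D w v} : Set V).ncard = 2 := by
      rw [← Nat.card_coe_set_eq]; exact hine v
    obtain ⟨a, b, hab, hset⟩ := Set.ncard_eq_two.mp h2
    have hma : a ∈ ({w | D w v} : Set V) := by rw [hset]; exact Set.mem_insert a {b}
    have hmb : b ∈ ({w | D w v} : Set V) := by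
      rw [hset]; exact Set.mem_insert_iff.mpr (Or.inr rfl)
    refine ⟨a, b, hab, hma, hmb, fun t ht => ?_⟩
    have htm : t ∈ ({a, b} : Set V) := by rw [← hset]; exact ht
    exact htm
  have hne : Nonempty V := Fintype.card_pos_iff.mp (by omega)
  obtain ⟨f, hf⟩ := ThreeDicrit.core hor hOutE hInE (ThreeDicrit.hcol_of_crit hor hcrit)
  exact ThreeDicrit.not_dicolourable_two hcrit (ThreeDicrit.dicolourable_of_good hf)
end

section
/- Every directed cactus is 2-dicolourable. -/
/-- A subgraph is non-separable if it is connected and stays connected after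
deleting any single vertex. -/
def IsNonseparable {V : Type*} {G : SimpleGraph V} (H : G.Subgraph) : Prop :=
  H.Connected ∧ ∀ v ∈ H.verts, (H.deleteVerts {v}).Connected

/-- A block: a maximal non-separable subgraph. -/
def IsBlock {V : Type*} {G : SimpleGraph V} (H : G.Subgraph) : Prop :=
  IsNonseparable H ∧ ∀ H' : G.Subgraph, IsNonseparable H' → H ≤ H' → H = H'

/-- The subgraph is a cycle. -/
def IsCycleSubgraph {V : Type*} {G : SimpleGraph V} (H : G.Subgraph) : Prop :=
  ∃ (v : V) (w : G.Walk v v), w.IsCycle ∧ H = w.toSubgraph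

/-- The subgraph is a single edge. -/
def IsEdgeSubgraph {V : Type*} {G : SimpleGraph V} (H : G.Subgraph) : Prop :=
  ∃ (u v : V) (h : G.Adj u v), H = G.subgraphOfAdj h

/-- A cactus: a graph each of whose blocks is a cycle or a single edge. -/
def IsCactus {V : Type*} (G : SimpleGraph V) : Prop :=
  ∀ H : G.Subgraph, IsBlock H → IsCycleSubgraph H ∨ IsEdgeSubgraph H

/-- The block `H` of the underlying graph of the digraph `D` is a single arc. -/
def IsSingleArcBlock {V : Type*} (D : V → V → Prop)
    (H : (SimpleGraph.fromRel D).Subgraph) : Prop :=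
  ∃ (u v : V) (h : (SimpleGraph.fromRel D).Adj u v),
    H = (SimpleGraph.fromRel D).subgraphOfAdj h ∧ Xor' (D u v) (D v u)

/-- The block `H` is a directed cycle: it is a cycle of the underlying graph in which
every vertex has exactly one out-neighbour and one in-neighbour. -/
def IsDirCycleBlock {V : Type*} (D : V → V → Prop)
    (H : (SimpleGraph.fromRel D).Subgraph) : Prop :=
  IsCycleSubgraph H ∧
    ∀ v ∈ H.verts, Nat.card {w | H.Adj v w ∧ D v w} = 1 ∧
      Nat.card {w | H.Adj v w ∧ D w v} = 1

/-- The block `H` is a bidirected odd cycle. -/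
def IsBidirOddCycleBlock {V : Type*} (D : V → V → Prop)
    (H : (SimpleGraph.fromRel D).Subgraph) : Prop :=
  (∃ (v : V) (w : (SimpleGraph.fromRel D).Walk v v),
      w.IsCycle ∧ Odd w.length ∧ H = w.toSubgraph) ∧
    ∀ a b, H.Adj a b → D a b ∧ D b a

/-- The block `H` is a bidirected complete graph. -/
def IsBidirCompleteBlock {V : Type*} (D : V → V → Prop)
    (H : (SimpleGraph.fromRel D).Subgraph) : Prop :=
  (∀ a ∈ H.verts, ∀ b ∈ H.verts, a ≠ b → H.Adj a b) ∧
    ∀ a b, H.Adj a b → D a b ∧ D b a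

/-- A directed cactus: an oriented graph each of whose blocks is a directed cycle
or a single arc. -/
def DirCactus {V : Type*} (D : V → V → Prop) : Prop :=
  OrientedGraph D ∧
    ∀ H : (SimpleGraph.fromRel D).Subgraph, IsBlock H →
      IsSingleArcBlock D H ∨ IsDirCycleBlock D H

open List in
lemma list_dup_split {α : Type*} {l : List α} (h : ¬ l.Nodup) :
    ∃ (x : α) (s t : List α), l = s ++ x :: t ∧ x ∈ t := by
  induction l with
  | nil => simp at h
  | cons b l' ih =>
    by_cases hb : b ∈ l'
    · exact ⟨b, [], l', rfl, hb⟩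
    · have : ¬ l'.Nodup := fun hn => h (List.nodup_cons.mpr ⟨hb, hn⟩)
      obtain ⟨x, s, t, rfl, hx⟩ := ih this
      exact ⟨x, b :: s, t, rfl, hx⟩

/-- From a closed chain, extract a closed chain with no repeated vertices. -/
lemma chain_cycle_extract {α : Type*} {R : α → α → Prop} :
    ∀ (n : ℕ) (a : α) (l : List α), l.length ≤ n → List.Chain R a (l ++ [a]) →
    ∃ (x : α) (m : List α), (x :: m).Nodup ∧ List.Chain R x (m ++ [x]) := by
  intro n
  induction n with
  | zero =>
    intro a l hl hc
    interval_cases hll : l.length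
    · exact ⟨a, l, by simp [List.length_eq_zero_iff.mp hll], hc⟩
  | succ n ih =>
    intro a l hl hc
    by_cases hnd : (a :: l).Nodup
    · exact ⟨a, l, hnd, hc⟩
    · by_cases ha : a ∈ l
      · obtain ⟨s, t, rfl⟩ := List.append_of_mem ha
        rw [List.append_assoc] at hc
        have := (List.isChain_cons_split (l₁ := s) (l₂ := t ++ [a])).mp hc
        exact ih a s (by simp at hl ⊢; omega) this.1
      · have h : ¬ l.Nodup := fun hn => hnd (List.nodup_cons.mpr ⟨ha, hn⟩)
        obtain ⟨x, s, t, rfl, hx⟩ := list_dup_split h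
        obtain ⟨u, w, rfl⟩ := List.append_of_mem hx
        rw [List.append_assoc] at hc
        have h1 := (List.isChain_cons_split (l₁ := s) (l₂ := (u ++ x :: w) ++ [a])).mp hc
        have h2 := h1.2
        rw [List.append_assoc, List.cons_append] at h2
        have := (List.isChain_cons_split (l₁ := u) (l₂ := w ++ [a])).mp (by
          simpa using h2)
        exact ih x u (by simp at hl ⊢; omega) this.1

lemma transGen_cycle_extract {α : Type*} {R : α → α → Prop} {v : α}
    (h : Relation.TransGen R v v) :
    ∃ (x : α) (m : List α), (x :: m).Nodup ∧ List.Chain R x (m ++ [x]) := by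
  obtain ⟨w, hvw, hwv⟩ := Relation.TransGen.head'_iff.mp h
  obtain ⟨l, hcl, hlast⟩ := List.exists_isChain_cons_of_relationReflTransGen hwv
  have hch : List.Chain R v (w :: l) := List.Chain.cons hvw hcl
  have hne : w :: l ≠ [] := by simp
  have hsplit : (w :: l).dropLast ++ [v] = w :: l := by
    conv_rhs => rw [← List.dropLast_append_getLast hne]
    rw [hlast]
  rw [← hsplit] at hch
  exact chain_cycle_extract (w :: l).dropLast.length v _ le_rfl hch

namespace SimpleGraph
variable {V : Type*} {G : SimpleGraph V}

/-- Build a walk from a chain of adjacencies. -/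
def mkWalk : ∀ (a : V) (l : List V) (b : V), List.Chain G.Adj a (l ++ [b]) → G.Walk a b
  | _, [], _, h => Walk.cons (by simpa [List.Chain] using h) Walk.nil
  | _, c :: l, b, h =>
      Walk.cons (List.chain_cons.mp h).1 (mkWalk c l b (show List.Chain G.Adj c (l ++ [b]) from (List.chain_cons.mp h).2))

@[simp] lemma support_mkWalk : ∀ (a : V) (l : List V) (b : V)
    (h : List.Chain G.Adj a (l ++ [b])), (mkWalk a l b h).support = a :: (l ++ [b])
  | _, [], _, _ => rfl
  | a, c :: l, b, h => by
      rw [mkWalk, Walk.support_cons, support_mkWalk]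
      simp

lemma edges_mkWalk_cons (a c : V) (l : List V) (b : V)
    (h : List.Chain G.Adj a ((c :: l) ++ [b])) :
    (mkWalk a (c :: l) b h).edges
      = s(a, c) :: (mkWalk c l b (List.chain_cons.mp h).2).edges := rfl

lemma mkWalk_getLast_edge : ∀ (a : V) (l : List V) (b : V)
    (h : List.Chain G.Adj a (l ++ [b])),
    s((a :: l).getLast (by simp), b) ∈ (mkWalk a l b h).edges
  | _, [], _, _ => by simp [mkWalk]
  | a, c :: l, b, h => by
      rw [edges_mkWalk_cons]
      have := mkWalk_getLast_edge c l b (List.chain_cons.mp h).2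
      simp only [List.getLast_cons_cons]
      exact List.mem_cons_of_mem _ this

end SimpleGraph

namespace SimpleGraph
variable {V : Type*} {G : SimpleGraph V}

lemma isPath_start_edge {a b c : V} {p : G.Walk a b} (hp : p.IsPath)
    (he : s(a, c) ∈ p.edges) :
    ∃ (hadj : G.Adj a c) (q : G.Walk c b), p = Walk.cons hadj q := by
  cases p with
  | nil => simp at he
  | cons h q =>
    rename_i u
    rw [Walk.edges_cons, List.mem_cons] at he
    rcases he with he | he
    · rcases Sym2.eq_iff.mp he with ⟨-, rfl⟩ | ⟨h1, rfl⟩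
      · exact ⟨h, q, rfl⟩
      · exact absurd h1 h.ne
    · exfalso
      have := Walk.fst_mem_support_of_mem_edges q he
      have hnd := hp.support_nodup
      rw [Walk.support_cons, List.nodup_cons] at hnd
      exact hnd.1 this

lemma isPath_loop_eq_nil {x : V} {q : G.Walk x x} (hq : q.IsPath) : q = Walk.nil := by
  cases q with
  | nil => rfl
  | cons h q' =>
    exfalso
    have hnd := hq.support_nodup
    rw [Walk.support_cons, List.nodup_cons] at hnd
    exact hnd.1 q'.end_mem_support

lemma edge_closing_not_mem {x y : V} {rest : List V} {p : G.Walk y x} (hp : p.IsPath)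
    (hsup : p.support = y :: rest ++ [x]) (hrest : rest ≠ []) :
    s(x, y) ∉ p.edges := by
  intro he
  rw [Sym2.eq_swap] at he
  obtain ⟨hadj, q, rfl⟩ := isPath_start_edge hp he
  have : q = Walk.nil := isPath_loop_eq_nil hp.of_cons
  subst this
  have := congrArg List.length hsup
  simp only [Walk.support_cons, Walk.support_nil, List.length_cons, List.length_append,
    List.length_singleton] at this
  exact hrest (List.length_eq_zero_iff.mp (by omega))

end SimpleGraph

namespace SimpleGraph
variable {V : Type*} {G : SimpleGraph V}

lemma cycle_deleteVerts_connected {x : V} {q : G.Walk x x} (hq : q.IsCycle) :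
    (q.toSubgraph.deleteVerts {x}).Connected := by
  cases q with
  | nil => exact absurd rfl hq.ne_nil
  | cons h p =>
    rename_i u
    have hp : p.IsPath := ((Walk.cons_isCycle_iff p h).mp hq).1
    have hpr : p.reverse.IsPath := hp.reverse
    rcases hpr2 : p.reverse with _ | ⟨h2, q2⟩
    · exact absurd h (G.loopless.irrefl x)
    · rename_i u2
      rw [hpr2] at hpr
      have hq2 : q2.IsPath := hpr.of_cons
      have hxq2 : x ∉ q2.support := by
        have := hpr.support_nodup
        rw [Walk.support_cons, List.nodup_cons] at this
        exact this.1
      have hsupp : p.support = q2.support.reverse ++ [x] := by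
        have : p.reverse.support = x :: q2.support := by rw [hpr2, Walk.support_cons]
        rw [Walk.support_reverse] at this
        have := congrArg List.reverse this
        simpa using this
      have hle : q2.toSubgraph ≤ (Walk.cons h p).toSubgraph := by
        calc q2.toSubgraph ≤ (Walk.cons h2 q2).toSubgraph := le_sup_right
        _ = p.reverse.toSubgraph := by rw [hpr2]
        _ = p.toSubgraph := p.toSubgraph_reverse
        _ ≤ (Walk.cons h p).toSubgraph := le_sup_right
      have hverts : q2.toSubgraph.verts
          = ((Walk.cons h p).toSubgraph.deleteVerts {x}).verts := by
        ext z
        simp only [Subgraph.deleteVerts_verts, Walk.verts_toSubgraph, Walk.support_cons,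
          Set.mem_diff, Set.mem_setOf_eq, List.mem_cons, hsupp, List.mem_append,
          List.mem_reverse, List.mem_singleton, Set.mem_singleton_iff]
        constructor
        · intro hz
          exact ⟨Or.inr (Or.inl hz), fun hzx => hxq2 (hzx ▸ hz)⟩
        · rintro ⟨hz, hzx⟩
          rcases hz with rfl | hz | hz
          · exact absurd rfl hzx
          · exact hz
          · simp at hz; exact absurd hz hzx
      have hle' : q2.toSubgraph ≤ (Walk.cons h p).toSubgraph.deleteVerts {x} := by
        constructor
        · rw [hverts]
        · intro a b hab
          have ha : a ∈ q2.toSubgraph.verts := hab.fst_mem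
          have hb : b ∈ q2.toSubgraph.verts := hab.snd_mem
          rw [Subgraph.deleteVerts_adj]
          have hva := hverts ▸ ha
          have hvb := hverts ▸ hb
          rw [Subgraph.deleteVerts_verts, Set.mem_diff] at hva hvb
          exact ⟨hva.1, hva.2, hvb.1, hvb.2, hle.2 hab⟩
      exact Subgraph.Connected.mono hle' hverts q2.toSubgraph_connected

lemma cycle_nonseparable {v : V} {W : G.Walk v v} (hW : W.IsCycle) :
    IsNonseparable W.toSubgraph := by
  classical
  refine ⟨W.toSubgraph_connected, fun x hx => ?_⟩
  rw [Walk.mem_verts_toSubgraph] at hx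
  have := cycle_deleteVerts_connected (hW.rotate hx)
  rwa [Walk.toSubgraph_rotate] at this

end SimpleGraph

instance {V : Type*} [Finite V] (G : SimpleGraph V) : Finite G.Subgraph := by
  haveI : Finite Prop := Finite.of_equiv Bool Equiv.propEquivBool.symm
  exact Finite.of_injective (fun H => (H.verts, H.Adj))
    (fun H K h => by
      obtain ⟨h1, h2⟩ := Prod.mk.injEq _ _ _ _ ▸ h
      exact SimpleGraph.Subgraph.ext h1 h2)

lemma exists_block_above {V : Type*} [Finite V] {G : SimpleGraph V} {H : G.Subgraph}
    (h : IsNonseparable H) : ∃ B : G.Subgraph, IsBlock B ∧ H ≤ B := by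
  have hfin : ({K : G.Subgraph | IsNonseparable K ∧ H ≤ K}).Finite := Set.toFinite _
  obtain ⟨B, hB, hmax⟩ := Set.Finite.exists_maximalFor id _ hfin ⟨H, h, le_rfl⟩
  exact ⟨B, ⟨hB.1, fun K hK hBK => le_antisymm hBK (hmax ⟨hK, le_trans hB.2 hBK⟩ hBK)⟩, hB.2⟩

open SimpleGraph in
lemma deleteVerts_sup {V : Type*} {G : SimpleGraph V} (H K : G.Subgraph) (s : Set V) :
    (H ⊔ K).deleteVerts s = H.deleteVerts s ⊔ K.deleteVerts s := by
  ext x y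
  · simp only [Subgraph.deleteVerts_verts, Subgraph.verts_sup]
    rw [Set.union_diff_distrib]
  · simp only [Subgraph.deleteVerts_adj, Subgraph.sup_adj, Subgraph.verts_sup,
      Set.mem_union]
    constructor
    · rintro ⟨h1, h2, h3, h4, h5 | h5⟩
      · exact Or.inl ⟨h5.fst_mem, h2, h5.snd_mem, h4, h5⟩
      · exact Or.inr ⟨h5.fst_mem, h2, h5.snd_mem, h4, h5⟩
    · rintro (⟨h1, h2, h3, h4, h5⟩ | ⟨h1, h2, h3, h4, h5⟩)
      · exact ⟨Or.inl h1, h2, Or.inl h3, h4, Or.inl h5⟩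
      · exact ⟨Or.inr h1, h2, Or.inr h3, h4, Or.inr h5⟩

open SimpleGraph in
lemma deleteVerts_not_mem {V : Type*} {G : SimpleGraph V} (H : G.Subgraph) {x : V}
    (hx : x ∉ H.verts) : H.deleteVerts {x} = H := by
  ext a b
  · simp only [Subgraph.deleteVerts_verts, Set.mem_diff, Set.mem_singleton_iff]
    exact ⟨fun h => h.1, fun h => ⟨h, fun he => hx (he ▸ h)⟩⟩
  · simp only [Subgraph.deleteVerts_adj, Set.mem_singleton_iff]
    refine ⟨fun h => h.2.2.2.2, fun h => ⟨h.fst_mem, fun he => hx (he ▸ h.fst_mem),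
      h.snd_mem, fun he => hx (he ▸ h.snd_mem), h⟩⟩

open SimpleGraph in
lemma nonseparable_sup {V : Type*} {G : SimpleGraph V} {H K : G.Subgraph} {u v : V}
    (hH : IsNonseparable H) (hK : IsNonseparable K) (huv : u ≠ v)
    (hu : u ∈ H.verts ∩ K.verts) (hv : v ∈ H.verts ∩ K.verts) :
    IsNonseparable (H ⊔ K) := by
  constructor
  · exact Subgraph.connected_sup hH.1.preconnected hK.1.preconnected ⟨u, hu⟩
  · intro x hx
    rw [deleteVerts_sup]
    -- pick a shared vertex different from x
    obtain ⟨w, hw, hwx⟩ : ∃ w, w ∈ H.verts ∩ K.verts ∧ w ≠ x := by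
      by_cases hux : u = x
      · exact ⟨v, hv, fun h => huv (hux ▸ h ▸ rfl)⟩
      · exact ⟨u, hu, hux⟩
    by_cases hxH : x ∈ H.verts <;> by_cases hxK : x ∈ K.verts
    · refine Subgraph.connected_sup (hH.2 x hxH).preconnected (hK.2 x hxK).preconnected ⟨w, ?_⟩
      simp only [Subgraph.verts_inf, Subgraph.deleteVerts_verts, Set.mem_inter_iff,
        Set.mem_diff, Set.mem_singleton_iff]
      exact ⟨⟨hw.1, hwx⟩, ⟨hw.2, hwx⟩⟩
    · rw [deleteVerts_not_mem K hxK]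
      refine Subgraph.connected_sup (hH.2 x hxH).preconnected hK.1.preconnected ⟨w, ?_⟩
      simp only [Subgraph.verts_inf, Subgraph.deleteVerts_verts, Set.mem_inter_iff,
        Set.mem_diff, Set.mem_singleton_iff]
      exact ⟨⟨hw.1, hwx⟩, hw.2⟩
    · rw [deleteVerts_not_mem H hxH]
      refine Subgraph.connected_sup hH.1.preconnected (hK.2 x hxK).preconnected ⟨w, ?_⟩
      simp only [Subgraph.verts_inf, Subgraph.deleteVerts_verts, Set.mem_inter_iff,
        Set.mem_diff, Set.mem_singleton_iff]
      exact ⟨hw.1, ⟨hw.2, hwx⟩⟩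
    · rcases hx with hx | hx
      · exact absurd hx hxH
      · exact absurd hx hxK

lemma blocks_eq_of_two_shared {V : Type*} {G : SimpleGraph V} {B1 B2 : G.Subgraph} {u v : V}
    (h1 : IsBlock B1) (h2 : IsBlock B2) (huv : u ≠ v)
    (hu : u ∈ B1.verts ∩ B2.verts) (hv : v ∈ B1.verts ∩ B2.verts) : B1 = B2 := by
  have hsup := nonseparable_sup h1.1 h2.1 huv hu hv
  have e1 : B1 = B1 ⊔ B2 := h1.2 _ hsup le_sup_left
  have e2 : B2 = B1 ⊔ B2 := h2.2 _ hsup le_sup_right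
  exact e1.trans e2.symm

open SimpleGraph in
lemma cycle_three_distinct {V : Type*} {G : SimpleGraph V} {z : V} {W : G.Walk z z}
    (hW : W.IsCycle) : ∃ a b c : V, a ∈ W.support ∧ b ∈ W.support ∧ c ∈ W.support ∧
      a ≠ b ∧ a ≠ c ∧ b ≠ c := by
  have hlen : 3 ≤ W.length := hW.three_le_length
  have hnd : W.support.tail.Nodup := hW.2
  have hlen2 : W.support.tail.length = W.length := by
    rw [List.length_tail, W.length_support]; omega
  have hmem : ∀ x ∈ W.support.tail, x ∈ W.support := by
    intro x hx
    rw [W.support_eq_cons]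
    exact List.mem_cons_of_mem _ hx
  rcases ht : W.support.tail with _ | ⟨a, _ | ⟨b, _ | ⟨c, r⟩⟩⟩ <;>
    rw [ht] at hlen2 <;> simp at hlen2 <;> try omega
  rw [ht] at hnd hmem
  simp only [List.nodup_cons, List.mem_cons, not_or] at hnd
  obtain ⟨⟨hab, hac, -⟩, ⟨hbc, -⟩, -⟩ := hnd
  exact ⟨a, b, c, hmem a (by simp), hmem b (by simp), hmem c (by simp), hab, hac, hbc⟩

open SimpleGraph in
lemma cycle_in_dicycle_block {V : Type*} [Finite V] {D : V → V → Prop} (hD : DirCactus D)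
    {z : V} {W : (SimpleGraph.fromRel D).Walk z z} (hW : W.IsCycle) :
    ∃ B : (SimpleGraph.fromRel D).Subgraph,
      IsBlock B ∧ IsDirCycleBlock D B ∧ W.toSubgraph ≤ B := by
  obtain ⟨B, hB, hle⟩ := exists_block_above (cycle_nonseparable hW)
  refine ⟨B, hB, ?_, hle⟩
  rcases hD.2 B hB with harc | hdc
  · exfalso
    obtain ⟨u, v, hadj, rfl, -⟩ := harc
    obtain ⟨a, b, c, ha, hb, hc, hab, hac, hbc⟩ := cycle_three_distinct hW
    have hsub : ∀ x ∈ W.support, x = u ∨ x = v := by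
      intro x hx
      have : x ∈ ((SimpleGraph.fromRel D).subgraphOfAdj hadj).verts :=
        hle.1 (by rwa [Walk.mem_verts_toSubgraph])
      simpa using this
    rcases hsub a ha with rfl | rfl <;> rcases hsub b hb with rfl | rfl <;>
      rcases hsub c hc with rfl | rfl <;> simp_all
  · exact hdc

lemma set_card_one_eq {α : Type*} {s : Set α} (h : Nat.card s = 1) {a b : α}
    (ha : a ∈ s) (hb : b ∈ s) : a = b := by
  have hs := (Nat.card_eq_one_iff_unique.mp h).1
  exact Subtype.ext_iff.mp (hs.elim ⟨a, ha⟩ ⟨b, hb⟩)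

open SimpleGraph in
lemma dicycle_block_no_three_nbrs {V : Type*} {D : V → V → Prop}
    {B : (SimpleGraph.fromRel D).Subgraph} (hB : IsDirCycleBlock D B) {x a b c : V}
    (hx : x ∈ B.verts) (hab : a ≠ b) (hac : a ≠ c) (hbc : b ≠ c)
    (ha : B.Adj x a) (hb : B.Adj x b) (hc : B.Adj x c) : False := by
  obtain ⟨hout, hin⟩ := hB.2 x hx
  have hmem : ∀ w, B.Adj x w →
      w ∈ {w | B.Adj x w ∧ D x w} ∨ w ∈ {w | B.Adj x w ∧ D w x} := by
    intro w hw
    have := B.adj_sub hw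
    rw [SimpleGraph.fromRel_adj] at this
    rcases this.2 with h | h
    · exact Or.inl ⟨hw, h⟩
    · exact Or.inr ⟨hw, h⟩
  rcases hmem a ha with h1 | h1 <;> rcases hmem b hb with h2 | h2 <;>
    rcases hmem c hc with h3 | h3
  · exact hab (set_card_one_eq hout h1 h2)
  · exact hab (set_card_one_eq hout h1 h2)
  · exact hac (set_card_one_eq hout h1 h3)
  · exact hbc (set_card_one_eq hin h2 h3)
  · exact hbc (set_card_one_eq hout h2 h3)
  · exact hac (set_card_one_eq hin h1 h3)
  · exact hab (set_card_one_eq hin h1 h2)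
  · exact hab (set_card_one_eq hin h1 h2)

lemma chain_all_target {α : Type*} {R : α → α → Prop} :
    ∀ {l : List α} {a : α}, List.Chain R a l → ∀ b ∈ l, ∃ c, R c b := by
  intro l
  induction l with
  | nil => intro a _ b hb; simp at hb
  | cons e l' ih =>
    intro a hc b hb
    rw [List.Chain, List.chain_cons] at hc
    rcases List.mem_cons.mp hb with rfl | hb
    · exact ⟨a, hc.1⟩
    · exact ih hc.2 b hb

open SimpleGraph in
lemma dist_step {V : Type*} {G : SimpleGraph V} {r a b : V} (hr : G.Reachable r a)
    (hab : G.Adj a b) : G.dist r b ≤ G.dist r a + 1 := by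
  obtain ⟨w, hw⟩ := hr.exists_walk_length_eq_dist
  have := SimpleGraph.dist_le (w.append (Walk.cons hab Walk.nil))
  rwa [Walk.length_append, hw] at this

open SimpleGraph in
lemma chain_dist_eq {V : Type*} {G : SimpleGraph V} {r : V} {k : ℕ} :
    ∀ (l : List V) (a : V), List.Chain G.Adj a l → G.Reachable r a →
    (∀ u ∈ a :: l, G.dist r u % 2 = k) → ∀ u ∈ a :: l, G.dist r u = G.dist r a := by
  intro l
  induction l with
  | nil => intro a _ _ _ u hu; simp at hu; rw [hu]
  | cons b l' ih =>
    intro a hc hra hpar u hu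
    rw [List.Chain, List.chain_cons] at hc
    have hrb : G.Reachable r b := hra.trans hc.1.reachable
    have hdb : G.dist r b = G.dist r a := by
      have h1 := dist_step hra hc.1
      have h2 := dist_step hrb hc.1.symm
      have p1 := hpar a (by simp)
      have p2 := hpar b (by simp)
      omega
    rcases List.mem_cons.mp hu with rfl | hu
    · rfl
    · have := ih b hc.2 hrb (fun w hw => hpar w (List.mem_cons_of_mem _ hw)) u hu
      rw [this, hdb]

open SimpleGraph in
lemma walk_meet {V : Type*} {G : SimpleGraph V} {r x : V} {w : G.Walk r x}
    (hw : w.length = G.dist r x) {u : V} (hu : u ∈ w.support)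
    (hdu : G.dist r u = G.dist r x) : u = x := by
  classical
  have hsplit := w.take_spec hu
  have hlen : (w.takeUntil u hu).length + (w.dropUntil u hu).length = G.dist r x := by
    rw [← hw, ← SimpleGraph.Walk.length_append, hsplit]
  have h1 : G.dist r u ≤ (w.takeUntil u hu).length := SimpleGraph.dist_le _
  have h0 : (w.dropUntil u hu).length = 0 := by omega
  cases hdrop : w.dropUntil u hu with
  | nil => rfl
  | cons h q => rw [hdrop] at h0; simp at h0

set_option maxHeartbeats 1000000 in

set_option maxHeartbeats 1000000 in
/-- Every directed cactus is 2-dicolourable. -/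
theorem dirCactus_two_dicolourable {V : Type*} [Fintype V] (D : V → V → Prop)
    (hD : DirCactus D) : Dicolourable D 2 := by
  classical
  set G := SimpleGraph.fromRel D with hGdef
  have horient := hD.1
  have hne : ∀ a b, D a b → a ≠ b := fun a b h heq => horient a b h (heq ▸ h)
  have hadjD : ∀ a b, D a b → G.Adj a b := fun a b h =>
    (SimpleGraph.fromRel_adj D a b).mpr ⟨hne a b h, Or.inl h⟩
  set root : V → V := fun v => (G.connectedComponentMk v).out with hrootdef
  have hrootreach : ∀ v, G.Reachable (root v) v := by
    intro v
    have : G.connectedComponentMk (root v) = G.connectedComponentMk v := Quot.out_eq _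
    exact SimpleGraph.ConnectedComponent.exact this
  have hrooteq : ∀ u v, G.Reachable u v → root u = root v := by
    intro u v h
    show (G.connectedComponentMk u).out = (G.connectedComponentMk v).out
    rw [SimpleGraph.ConnectedComponent.sound h]
  set f : V → Fin 2 := fun v => ⟨G.dist (root v) v % 2, by omega⟩ with hfdef
  refine ⟨f, fun i v hv => ?_⟩
  -- extract a simple directed cycle inside the colour class
  obtain ⟨x, m, hnd, hch⟩ := transGen_cycle_extract hv
  have hchD : List.Chain D x (m ++ [x]) := List.IsChain.imp (fun ⦃a b⦄ h => h.2.2) hch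
  have hclass : ∀ u ∈ x :: m, f u = i := by
    intro u hu
    have hu' : u ∈ m ++ [x] := by
      rcases List.mem_cons.mp hu with rfl | hu
      · simp
      · exact List.mem_append_left _ hu
    obtain ⟨c, hc⟩ := chain_all_target hch u hu'
    exact hc.2.1
  clear hch hv
  rcases m with - | ⟨y, rest⟩
  · simp only [List.Chain, List.nil_append, List.isChain_cons_cons] at hchD
    exact hne x x hchD.1 rfl
  rcases rest with - | ⟨z1, rest'⟩
  · simp only [List.Chain, List.cons_append, List.nil_append, List.isChain_cons_cons] at hchD
    exact horient x y hchD.1 hchD.2.1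
  set rest : List V := z1 :: rest' with hrestdef
  have hrestne : rest ≠ [] := by simp [hrestdef]
  -- the set of cycle vertices
  set VC : List V := x :: y :: rest with hVCdef
  have hchAdj : List.Chain G.Adj x ((y :: rest) ++ [x]) := by
    have : List.Chain D x ((y :: rest) ++ [x]) := hchD
    exact List.IsChain.imp (fun ⦃a b⦄ h => hadjD a b h) this
  rw [List.cons_append, List.Chain, List.chain_cons] at hchAdj
  have hxy : G.Adj x y := hchAdj.1
  -- the walk around the directed cycle
  set p : G.Walk y x := SimpleGraph.mkWalk y rest x (show List.Chain G.Adj y (rest ++ [x]) from hchAdj.2) with hpdef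
  have hDxy : D x y := (List.chain_cons.mp hchD).1
  have hpsup : p.support = y :: rest ++ [x] := by
    rw [hpdef, SimpleGraph.support_mkWalk, hrestdef]
    simp
  have hVCnodup : VC.Nodup := hnd
  have hysup_nodup : (y :: rest ++ [x]).Nodup := by
    have : ((y :: rest) ++ [x]).Nodup := (List.perm_append_singleton x (y :: rest)).nodup_iff.mpr hVCnodup
    simpa using this
  have hp : p.IsPath := by
    rw [SimpleGraph.Walk.isPath_def, hpsup]
    exact hysup_nodup
  have hWCcyc : (SimpleGraph.Walk.cons hxy p).IsCycle := by
    rw [SimpleGraph.Walk.cons_isCycle_iff]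
    exact ⟨hp, SimpleGraph.edge_closing_not_mem hp hpsup hrestne⟩
  set WC : G.Walk x x := SimpleGraph.Walk.cons hxy p with hWCdef
  have hWCsup : WC.support = x :: (y :: rest ++ [x]) := by
    rw [hWCdef, SimpleGraph.Walk.support_cons, hpsup]
  have hVCsub : ∀ u ∈ VC, u ∈ WC.support := by
    intro u hu
    rw [hWCsup]
    rcases List.mem_cons.mp hu with rfl | hu
    · simp
    · simp only [List.mem_cons, List.mem_append] at hu ⊢
      tauto
  obtain ⟨B, hB, hBdc, hBle⟩ := cycle_in_dicycle_block hD hWCcyc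
  -- all cycle vertices have the same root r and the same distance d
  set r : V := root x with hrdef
  have hreach : ∀ u ∈ VC, G.Reachable x u := by
    intro u hu
    exact ⟨WC.takeUntil u (hVCsub u hu)⟩
  have hroots : ∀ u ∈ VC, root u = r := fun u hu => (hrooteq x u (hreach u hu)).symm
  have hpar : ∀ u ∈ VC, G.dist r u % 2 = (i : ℕ) := by
    intro u hu
    have := hclass u hu
    rw [hfdef] at this
    have := congrArg (Fin.val) this
    simpa [hroots u hu] using this
  have hrx : G.Reachable r x := hrootreach x
  have hdists : ∀ u ∈ VC, G.dist r u = G.dist r x := by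
    have hchAdj2 : List.Chain G.Adj x ((y :: rest) ++ [x]) :=
      List.Chain.imp (fun ⦃a b⦄ h => hadjD a b h) hchD
    intro u hu
    have hVCsub2 : ∀ w ∈ VC, w ∈ x :: ((y :: rest) ++ [x]) := by
      intro w hw
      rcases List.mem_cons.mp hw with rfl | hw
      · simp
      · exact List.mem_cons_of_mem _ (List.mem_append_left _ hw)
    refine chain_dist_eq (k := (i : ℕ)) _ x hchAdj2 hrx ?_ u (hVCsub2 u hu)
    intro w hw
    rcases List.mem_cons.mp hw with hwx | hw
    · rw [hwx]; exact hpar x (List.mem_cons_self)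
    · rcases List.mem_append.mp hw with hw | hw
      · exact hpar w (List.mem_cons_of_mem _ hw)
      · rw [List.mem_singleton.mp hw]
        exact hpar x (List.mem_cons_self)
  -- shortest paths to x and y
  obtain ⟨Px, hPx⟩ := hrx.exists_walk_length_eq_dist
  have hry : G.Reachable r y := hrx.trans hxy.reachable
  obtain ⟨Py, hPy⟩ := hry.exists_walk_length_eq_dist
  have hdisty : G.dist r y = G.dist r x := hdists y (by simp [hVCdef])
  have hPxmeet : ∀ u ∈ Px.support, u ∈ VC → u = x := by
    intro u hu huVC
    exact walk_meet hPx hu (hdists u huVC)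
  have hPymeet : ∀ u ∈ Py.support, u ∈ VC → u = y := by
    intro u hu huVC
    have : G.dist r u = G.dist r y := by rw [hdists u huVC, hdisty]
    exact walk_meet hPy hu this
  -- the path Q from x to y avoiding the cycle
  set Q : G.Walk x y := (Px.reverse.append Py).bypass with hQdef
  have hQpath : Q.IsPath := SimpleGraph.Walk.bypass_isPath _
  have hQsupsub : ∀ u ∈ Q.support, u ∈ Px.support ∨ u ∈ Py.support := by
    intro u hu
    have := SimpleGraph.Walk.support_bypass_subset _ hu
    rw [SimpleGraph.Walk.mem_support_append_iff, SimpleGraph.Walk.support_reverse,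
      List.mem_reverse] at this
    exact this
  have hQVC : ∀ u ∈ Q.support, u ∈ VC → u = x ∨ u = y := by
    intro u hu huVC
    rcases hQsupsub u hu with h | h
    · exact Or.inl (hPxmeet u h huVC)
    · exact Or.inr (hPymeet u h huVC)
  have hQedgesub : ∀ e ∈ Q.edges, e ∈ Px.edges ∨ e ∈ Py.edges := by
    intro e he
    have := SimpleGraph.Walk.edges_bypass_subset _ he
    rw [SimpleGraph.Walk.edges_append, List.mem_append, SimpleGraph.Walk.edges_reverse,
      List.mem_reverse] at this
    exact this
  have hxyQ : s(x, y) ∉ Q.edges := by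
    intro h
    rcases hQedgesub _ h with h | h
    · have : y ∈ Px.support := SimpleGraph.Walk.snd_mem_support_of_mem_edges _ h
      have := hPxmeet y this (by simp [hVCdef])
      exact hne x y hDxy this.symm
    · have : x ∈ Py.support := SimpleGraph.Walk.fst_mem_support_of_mem_edges _ h
      have := hPymeet x this (by simp [hVCdef])
      exact hne x y hDxy this
  have hQWC : ∀ e ∈ Q.edges, e ∉ WC.edges := by
    intro e heQ heWC
    induction e using Sym2.ind with
    | _ a b =>
      have haQ : a ∈ Q.support := SimpleGraph.Walk.fst_mem_support_of_mem_edges _ heQ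
      have hbQ : b ∈ Q.support := SimpleGraph.Walk.snd_mem_support_of_mem_edges _ heQ
      have haWC : a ∈ WC.support := SimpleGraph.Walk.fst_mem_support_of_mem_edges _ heWC
      have hbWC : b ∈ WC.support := SimpleGraph.Walk.snd_mem_support_of_mem_edges _ heWC
      have hVCeq : ∀ w ∈ WC.support, w ∈ VC := by
        intro w hw
        rw [hWCsup] at hw
        rw [hVCdef]
        simp only [List.mem_cons, List.mem_append, List.mem_singleton] at hw ⊢
        tauto
      have hab : a ≠ b := (Q.adj_of_mem_edges heQ).ne
      rcases hQVC a haQ (hVCeq a haWC) with rfl | rfl <;>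
        rcases hQVC b hbQ (hVCeq b hbWC) with rfl | rfl
      · exact hab rfl
      · exact hxyQ heQ
      · rw [Sym2.eq_swap] at heQ; exact hxyQ heQ
      · exact hab rfl
  -- the auxiliary cycle W'' = Q.append p
  have hQne : ¬ Q.Nil := SimpleGraph.Walk.not_nil_of_ne (hne x y hDxy)
  have hpedgesWC : ∀ e ∈ p.edges, e ∈ WC.edges := by
    intro e he
    rw [hWCdef, SimpleGraph.Walk.edges_cons]
    exact List.mem_cons_of_mem _ he
  have hW''cyc : (Q.append p).IsCycle := by
    rw [SimpleGraph.Walk.isCycle_def]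
    refine ⟨⟨?_⟩, ?_, ?_⟩
    · rw [SimpleGraph.Walk.edges_append]
      refine List.Nodup.append hQpath.isTrail.edges_nodup hp.isTrail.edges_nodup ?_
      intro e heQ hep
      exact hQWC e heQ (hpedgesWC e hep)
    · intro h
      have := congrArg SimpleGraph.Walk.length h
      rw [SimpleGraph.Walk.length_append] at this
      have hplen : p.length + 1 = (y :: rest ++ [x]).length := by
        rw [← hpsup, SimpleGraph.Walk.length_support]
      simp only [SimpleGraph.Walk.length_nil, List.length_append, List.length_cons, List.length_nil] at this hplen
      omega
    · rw [SimpleGraph.Walk.tail_support_append]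
      have hQtail : Q.support = x :: Q.support.tail := Q.support_eq_cons
      have hQtailnodup : Q.support.tail.Nodup := by
        have := hQpath.support_nodup
        rw [hQtail] at this
        exact (List.nodup_cons.mp this).2
      have hxQtail : x ∉ Q.support.tail := by
        have := hQpath.support_nodup
        rw [hQtail] at this
        exact (List.nodup_cons.mp this).1
      have hptailnodup : p.support.tail.Nodup := by
        rw [hpsup]
        exact hysup_nodup.of_cons
      refine List.Nodup.append hQtailnodup hptailnodup ?_
      intro z hzQ hzp
      have hzsupQ : z ∈ Q.support := by rw [hQtail]; exact List.mem_cons_of_mem _ hzQ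
      have hzVC : z ∈ VC := by
        rw [hpsup] at hzp
        simp only [List.cons_append, List.tail_cons, List.mem_append, List.mem_singleton] at hzp
        rcases hzp with hz | rfl
        · exact List.mem_cons_of_mem _ (List.mem_cons_of_mem _ hz)
        · exact List.mem_cons_self
      rcases hQVC z hzsupQ hzVC with hzx | hzy
      · rw [hzx] at hzQ; exact hxQtail hzQ
      · rw [hzy] at hzp
        rw [hpsup] at hzp
        simp only [List.cons_append, List.tail_cons, List.mem_append, List.mem_singleton] at hzp
        rcases hzp with hz | heq
        · have : VC.Nodup := hVCnodup
          rw [hVCdef] at this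
          simp only [List.nodup_cons] at this
          exact this.2.1 hz
        · exact hne x y hDxy heq.symm
  obtain ⟨B'', hB'', hB''dc, hB''le⟩ := cycle_in_dicycle_block hD hW''cyc
  -- identify the two blocks via the shared edge s(y, z1)
  have hyz1p : s(y, z1) ∈ p.edges := by
    show s(y, z1) ∈ (SimpleGraph.mkWalk y (z1 :: rest') x (show List.Chain G.Adj y ((z1 :: rest') ++ [x]) from hchAdj.2)).edges
    rw [SimpleGraph.edges_mkWalk_cons]
    exact List.mem_cons_self
  have hadjWC : ∀ a b : V, s(a, b) ∈ WC.edges → B.Adj a b := by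
    intro a b h
    exact hBle.2 ((SimpleGraph.Subgraph.mem_edgeSet).mp
      ((WC.mem_edges_toSubgraph).mpr h))
  have hadjW'' : ∀ a b : V, s(a, b) ∈ (Q.append p).edges → B''.Adj a b := by
    intro a b h
    exact hB''le.2 ((SimpleGraph.Subgraph.mem_edgeSet).mp
      (((Q.append p).mem_edges_toSubgraph).mpr h))
  have hyz1B : B.Adj y z1 := hadjWC y z1 (hpedgesWC _ hyz1p)
  have hyz1B'' : B''.Adj y z1 := hadjW'' y z1 (by
    rw [SimpleGraph.Walk.edges_append, List.mem_append]; exact Or.inr hyz1p)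
  have hBeq : B = B'' := by
    refine blocks_eq_of_two_shared hB hB'' (B.adj_sub hyz1B).ne ?_ ?_
    · exact ⟨hyz1B.fst_mem, hyz1B''.fst_mem⟩
    · exact ⟨hyz1B.snd_mem, hyz1B''.snd_mem⟩
  -- the three distinct neighbours of x in B
  obtain ⟨w, hw, Q', hQ'⟩ := SimpleGraph.Walk.not_nil_iff.mp hQne
  have hswQ : s(x, w) ∈ Q.edges := by
    rw [hQ', SimpleGraph.Walk.edges_cons]
    exact List.mem_cons_self
  have hxwB : B.Adj x w := by
    rw [hBeq]
    refine hadjW'' x w ?_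
    rw [SimpleGraph.Walk.edges_append, List.mem_append]
    exact Or.inl hswQ
  have hxyB : B.Adj x y := by
    refine hadjWC x y ?_
    rw [hWCdef, SimpleGraph.Walk.edges_cons]
    exact List.mem_cons_self
  set xm : V := (y :: rest).getLast (by simp) with hxmdef
  have hxm_edge : s(xm, x) ∈ p.edges := by
    have := SimpleGraph.mkWalk_getLast_edge y rest x hchAdj.2
    rw [← hpdef] at this
    exact this
  have hxmB : B.Adj x xm := (hadjWC xm x (hpedgesWC _ hxm_edge)).symm
  have hxmem : x ∈ B.verts := hxyB.fst_mem
  have hxmrest : xm ∈ rest := by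
    rw [hxmdef, List.getLast_cons hrestne]
    exact List.getLast_mem hrestne
  have hnd1 := List.nodup_cons.mp hnd
  have hnd2 := List.nodup_cons.mp hnd1.2
  have hyxm : y ≠ xm := fun h => hnd2.1 (h ▸ hxmrest)
  have hyw : y ≠ w := by
    intro h
    refine hxyQ ?_
    have hxx : s(x, y) = s(x, w) := by rw [h]
    rw [hxx]
    exact hswQ
  have hwQsup : w ∈ Q.support := by
    rw [hQ', SimpleGraph.Walk.support_cons]
    exact List.mem_cons_of_mem _ Q'.start_mem_support
  have hxmw : xm ≠ w := by
    intro h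
    have hwVC : w ∈ VC := by
      rw [← h]
      exact List.mem_cons_of_mem _ (List.mem_cons_of_mem _ hxmrest)
    rcases hQVC w hwQsup hwVC with h' | h'
    · exact hw.ne h'.symm
    · exact hyw h'.symm
  exact dicycle_block_no_three_nbrs hBdc hxmem hyxm hyw hxmw hxyB hxmB hxwB
end

section
/- Suppose there exists an oriented graph on 12 vertices with no acyclic induced subdigraph of order 5 in which some vertex has out-degree at most 4. Then, assuming that the unique 12-vertex tournament with no transitive subtournament of order 5 is 5- or 6-out-regular (every vertex has out-degree 5 or 6), one obtains a contradiction; hence every oriented graph of order 12 with no acyclic induced subdigraph of order 5 has minimum out-degree at least 5 and minimum in-degree at least 5, and in particular at least 60 arcs. -/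
lemma my_acyclicOn_mono {V : Type*} {D T : V → V → Prop} (h : ∀ a b, D a b → T a b)
    {S : Set V} (hT : AcyclicOn T S) : AcyclicOn D S := by
  intro v hv
  exact hT v (Relation.TransGen.mono (fun a b hab => ⟨hab.1, hab.2.1, h a b hab.2.2⟩) _ _ hv)

lemma my_ext_tournament {V : Type*} {D P : V → V → Prop} (hor : OrientedGraph D)
    (hP1 : ∀ a b, a ≠ b → P a b ∨ P b a)
    (hP2 : ∀ a b, a ≠ b → ¬(P a b ∧ P b a)) :
    IsTournament (fun a b => D a b ∨ (a ≠ b ∧ ¬D a b ∧ ¬D b a ∧ P a b)) := by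
  constructor
  · rintro a b (h1 | ⟨hne, h2, h3, h4⟩) hba
    · rcases hba with h1' | ⟨hne', h2', h3', h4'⟩
      · exact hor a b h1 h1'
      · exact h3' h1
    · rcases hba with h1' | ⟨hne', h2', h3', h4'⟩
      · exact h3 h1'
      · exact hP2 a b hne ⟨h4, h4'⟩
  · intro a b hab
    by_cases h1 : D a b
    · exact Or.inl (Or.inl h1)
    by_cases h2 : D b a
    · exact Or.inr (Or.inl h2)
    rcases hP1 a b hab with h | h
    · exact Or.inl (Or.inr ⟨hab, h1, h2, h⟩)
    · exact Or.inr (Or.inr ⟨hab.symm, h2, h1, h⟩)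

lemma my_tourn_deg {V : Type*} [Fintype V] {T : V → V → Prop} (hT : IsTournament T) (v : V) :
    outDeg T v + inDeg T v = Fintype.card V - 1 := by
  classical
  have hdisj : Disjoint {w | T v w} {w | T w v} := by
    rw [Set.disjoint_left]; intro w h1 h2; exact hT.1 v w h1 h2
  have hunion : {w | T v w} ∪ {w | T w v} = {v}ᶜ := by
    ext w
    simp only [Set.mem_union, Set.mem_setOf_eq, Set.mem_compl_iff, Set.mem_singleton_iff]
    constructor
    · rintro (h | h) rfl
      · exact hT.1 _ _ h h
      · exact hT.1 _ _ h h
    · intro hw; exact (hT.2 v w (Ne.symm hw))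
  have h1 : outDeg T v + inDeg T v = ({w | T v w} ∪ {w | T w v}).ncard := by
    rw [Set.ncard_union_eq hdisj (Set.toFinite _) (Set.toFinite _)]
    unfold outDeg inDeg
    rw [Nat.card_coe_set_eq, Nat.card_coe_set_eq]
  rw [h1, hunion]
  rw [show Fintype.card V = Nat.card V from (Nat.card_eq_fintype_card).symm,
    ← Set.ncard_univ (α := V)]
  rw [Set.compl_eq_univ_diff, Set.ncard_diff (Set.subset_univ {v}) (Set.toFinite _),
    Set.ncard_singleton]

lemma my_numArcs_eq {V : Type*} [Fintype V] (D : V → V → Prop) :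
    numArcs D = ∑ v : V, outDeg D v := by
  classical
  unfold numArcs outDeg
  have e2 : ↥{p : V × V | D p.1 p.2} ≃ Σ v : V, ↥{w | D v w} :=
    Equiv.subtypeProdEquivSigmaSubtype (fun a b => D a b)
  rw [Nat.card_congr e2, Nat.card_eq_fintype_card, Fintype.card_sigma]
  exact Finset.sum_congr rfl fun v _ => (Nat.card_eq_fintype_card).symm


/-- Assuming every 12-vertex tournament with no transitive subtournament of order 5
has all out-degrees equal to 5 or 6, every oriented graph of order 12 with no acyclic
induced subdigraph of order 5 has minimum out-degree and minimum in-degree at least 5,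
and in particular at least 60 arcs. -/
theorem twelve_vertex_min_degree {V : Type*} [Fintype V] (hV : Fintype.card V = 12)
    (hST : ∀ T : V → V → Prop, IsTournament T →
      (¬ ∃ S : Finset V, S.card = 5 ∧ AcyclicOn T (S : Set V)) →
      ∀ v : V, outDeg T v = 5 ∨ outDeg T v = 6)
    (D : V → V → Prop) (hor : OrientedGraph D)
    (hno : ¬ ∃ S : Finset V, S.card = 5 ∧ AcyclicOn D (S : Set V)) :
    (∀ v : V, 5 ≤ outDeg D v ∧ 5 ≤ inDeg D v) ∧ 60 ≤ numArcs D := by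
  classical
  obtain e := Fintype.equivFin V
  have key : ∀ v : V, 5 ≤ outDeg D v ∧ 5 ≤ inDeg D v := by
    intro v
    constructor
    · -- out-degree: orient all undecided pairs toward v
      set P : V → V → Prop := fun a b => b = v ∨ (a ≠ v ∧ b ≠ v ∧ e a < e b) with hP
      set T : V → V → Prop := fun a b => D a b ∨ (a ≠ b ∧ ¬D a b ∧ ¬D b a ∧ P a b) with hTdef
      have hT : IsTournament T := by
        apply my_ext_tournament hor
        · intro a b hab
          by_cases hb : b = v
          · exact Or.inl (Or.inl hb)
          by_cases ha : a = v
          · exact Or.inr (Or.inl ha)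
          rcases lt_or_gt_of_ne (fun h => hab (e.injective h)) with h | h
          · exact Or.inl (Or.inr ⟨ha, hb, h⟩)
          · exact Or.inr (Or.inr ⟨hb, ha, h⟩)
        · rintro a b hab ⟨h1 | ⟨ha1, hb1, h1⟩, h2 | ⟨hb2, ha2, h2⟩⟩
          · exact hab (h2.trans h1.symm)
          · exact hb2 h1
          · exact ha1 h2
          · exact absurd h2 (not_lt.mpr h1.le)
      have hnoT : ¬ ∃ S : Finset V, S.card = 5 ∧ AcyclicOn T (S : Set V) := by
        rintro ⟨S, h5, hac⟩
        exact hno ⟨S, h5, my_acyclicOn_mono (fun a b h => Or.inl h) hac⟩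
      have hdeg := hST T hT hnoT v
      have hset : {w | T v w} = {w | D v w} := by
        ext w
        simp only [Set.mem_setOf_eq, hTdef, hP]
        constructor
        · rintro (h | ⟨hne, _, _, rfl | ⟨hv, _, _⟩⟩)
          · exact h
          · exact absurd rfl hne
          · exact absurd rfl hv
        · exact Or.inl
      have : outDeg T v = outDeg D v := by unfold outDeg; rw [hset]
      omega
    · -- in-degree: orient all undecided pairs away from v
      set P : V → V → Prop := fun a b => a = v ∨ (a ≠ v ∧ b ≠ v ∧ e a < e b) with hP
      set T : V → V → Prop := fun a b => D a b ∨ (a ≠ b ∧ ¬D a b ∧ ¬D b a ∧ P a b) with hTdef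
      have hT : IsTournament T := by
        apply my_ext_tournament hor
        · intro a b hab
          by_cases ha : a = v
          · exact Or.inl (Or.inl ha)
          by_cases hb : b = v
          · exact Or.inr (Or.inl hb)
          rcases lt_or_gt_of_ne (fun h => hab (e.injective h)) with h | h
          · exact Or.inl (Or.inr ⟨ha, hb, h⟩)
          · exact Or.inr (Or.inr ⟨hb, ha, h⟩)
        · rintro a b hab ⟨h1 | ⟨ha1, hb1, h1⟩, h2 | ⟨hb2, ha2, h2⟩⟩
          · exact hab (h1.trans h2.symm)
          · exact ha2 h1
          · exact hb1 h2
          · exact absurd h2 (not_lt.mpr h1.le)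
      have hnoT : ¬ ∃ S : Finset V, S.card = 5 ∧ AcyclicOn T (S : Set V) := by
        rintro ⟨S, h5, hac⟩
        exact hno ⟨S, h5, my_acyclicOn_mono (fun a b h => Or.inl h) hac⟩
      have hdeg := hST T hT hnoT v
      have hset : {w | T w v} = {w | D w v} := by
        ext w
        simp only [Set.mem_setOf_eq, hTdef, hP]
        constructor
        · rintro (h | ⟨hne, _, _, rfl | ⟨_, hv, _⟩⟩)
          · exact h
          · exact absurd rfl hne.symm
          · exact absurd rfl hv
        · exact Or.inl
      have h1 : inDeg T v = inDeg D v := by unfold inDeg; rw [hset]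
      have h2 := my_tourn_deg hT v
      rw [hV] at h2
      omega
  refine ⟨key, ?_⟩
  rw [my_numArcs_eq]
  calc (60 : ℕ) = ∑ _v : V, 5 := by simp [Finset.sum_const, Finset.card_univ, hV]
    _ ≤ ∑ v : V, outDeg D v := Finset.sum_le_sum fun v _ => (key v).1
end
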